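/- arXiv:1603.03191 — 2 statements merged into one kernel-verified Lean document; each statement's English description precedes it below -/
import Mathlib

section
/- Fix a prime p. For every h ∈ H_p with h > 0 and every μ > 0, the function Θ_{h,μ} satisfies Θ_{h,μ}(pλ) = Θ_{h,μ}(λ) + hλ − μ for all λ > 0. Moreover, given finite families (h_i, μ_i) and (h'_j, μ'_j) in {h ∈ H_p : h > 0} × ℝ_{>0} with Σ_i μ_i − Σ_j μ'_j = 0, and h ∈ H_p with (p−1)h = Σ_i h_i − Σ_j h'_j, the function f(λ) := Σ_i Θ_{h_i,μ_i}(λ) − Σ_j Θ_{h'_j,μ'_j}(λ) − hλ is continuous, piecewise affine with all slopes in H_p, satisfies f(pλ) = f(λ) for all λ > 0, and for every λ > 0 its order satisfies Ord_λ(f) = Σ_{i : λ ∈ p^ℤ·(μ_i/h_i)} μ_i − Σ_{j : λ ∈ p^ℤ·(μ'_j/h'_j)} μ'_j. -/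
/-- The set `H_p = ℤ[1/p] = {a / p^n : a ∈ ℤ, n ∈ ℕ}` inside `ℝ`. -/
def HpSet (p : ℕ) : Set ℝ := {x : ℝ | ∃ (a : ℤ) (n : ℕ), x = (a : ℝ) / (p : ℝ) ^ n}

/-- `f` is piecewise affine on `(0,∞)` with all slopes in `S`. -/
def PiecewiseAffineWith (S : Set ℝ) (f : ℝ → ℝ) : Prop :=
  ∀ u v : ℝ, 0 < u → u < v →
    ∃ (n : ℕ) (t : ℕ → ℝ), 0 < n ∧ t 0 = u ∧ t n = v ∧ (∀ i < n, t i < t (i + 1)) ∧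
      ∀ i < n, ∃ s ∈ S, ∃ c : ℝ, ∀ x ∈ Set.Icc (t i) (t (i + 1)), f x = s * x + c

/-- `f` has right-hand slope `s` at `x`. -/
def HasRightSlope (f : ℝ → ℝ) (x s : ℝ) : Prop :=
  ∃ δ : ℝ, 0 < δ ∧ ∀ y ∈ Set.Ico x (x + δ), f y = f x + s * (y - x)

/-- `f` has left-hand slope `s` at `x`. -/
def HasLeftSlope (f : ℝ → ℝ) (x s : ℝ) : Prop :=
  ∃ δ : ℝ, 0 < δ ∧ ∀ y ∈ Set.Ioc (x - δ) x, f y = f x + s * (y - x)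

/-- The order of `f` at `λ` is `d = λ (f'₊(λ) − f'₋(λ))`. -/
def HasOrdAt (f : ℝ → ℝ) (lam d : ℝ) : Prop :=
  ∃ sp sm : ℝ, HasRightSlope f lam sp ∧ HasLeftSlope f lam sm ∧ d = lam * (sp - sm)

/-- `f₊(λ) = Σ_{m≥0} max(0, 1 − p^m λ)`. -/
noncomputable def fPlus (p : ℕ) (lam : ℝ) : ℝ := ∑' m : ℕ, max 0 (1 - (p : ℝ) ^ m * lam)

/-- `f₋(λ) = Σ_{m≥1} max(0, p^{−m} λ − 1)`. -/
noncomputable def fMinus (p : ℕ) (lam : ℝ) : ℝ :=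
  ∑' m : ℕ, max 0 (((p : ℝ) ^ (m + 1))⁻¹ * lam - 1)

/-- The basic theta function `θ = f₊ + f₋`. -/
noncomputable def theta (p : ℕ) (lam : ℝ) : ℝ := fPlus p lam + fMinus p lam

/-- `Θ_{h,μ}(λ) = μ θ(μ⁻¹ h λ)`. -/
noncomputable def ThetaF (p : ℕ) (h μ lam : ℝ) : ℝ := μ * theta p (μ⁻¹ * h * lam)
open Set Finset

section Helpers
variable {p : ℕ} (hp1 : 1 < (p : ℝ))

noncomputable def sl (p : ℕ) (k : ℤ) : ℝ := (1 - (p : ℝ) ^ (-k)) / ((p : ℝ) - 1)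

lemma p_pos (hp1 : 1 < (p : ℝ)) : (0:ℝ) < p := lt_trans one_pos hp1
lemma p_ne (hp1 : 1 < (p : ℝ)) : (p:ℝ) ≠ 0 := ne_of_gt (p_pos hp1)
lemma pm1_ne (hp1 : 1 < (p : ℝ)) : (p:ℝ) - 1 ≠ 0 := sub_ne_zero.2 (ne_of_gt hp1)

lemma zpow_pos' (hp1 : 1 < (p : ℝ)) (k : ℤ) : (0:ℝ) < (p:ℝ) ^ k :=
  zpow_pos (p_pos hp1) k

/-- HpSet closure -/
lemma HpSet.int_mem (a : ℤ) : (a : ℝ) ∈ HpSet p := ⟨a, 0, by simp⟩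

lemma HpSet.zpow_mem (hp1 : 1 < (p : ℝ)) (k : ℤ) : (p:ℝ) ^ k ∈ HpSet p := by
  rcases le_or_gt 0 k with h | h
  · exact ⟨(p:ℕ)^k.toNat, 0, by push_cast; rw [← zpow_natCast, Int.toNat_of_nonneg h]; simp⟩
  · refine ⟨1, (-k).toNat, ?_⟩
    rw [← zpow_natCast, Int.toNat_of_nonneg (by omega : 0 ≤ -k)]
    rw [eq_div_iff (ne_of_gt (zpow_pos' hp1 _)), ← zpow_add₀ (p_ne hp1)]
    simp

lemma HpSet.add_mem (hp1 : 1 < (p : ℝ)) {x y : ℝ} (hx : x ∈ HpSet p) (hy : y ∈ HpSet p) :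
    x + y ∈ HpSet p := by
  obtain ⟨a, n, rfl⟩ := hx; obtain ⟨b, m, rfl⟩ := hy
  refine ⟨a * p ^ m + b * p ^ n, n + m, ?_⟩
  have h1 : ((p:ℝ))^n ≠ 0 := by positivity
  have h2 : ((p:ℝ))^m ≠ 0 := by positivity
  push_cast
  rw [div_add_div _ _ h1 h2, pow_add, div_eq_div_iff (by positivity) (by positivity)]
  ring

lemma HpSet.neg_mem {x : ℝ} (hx : x ∈ HpSet p) : -x ∈ HpSet p := by
  obtain ⟨a, n, rfl⟩ := hx; exact ⟨-a, n, by push_cast; ring⟩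

lemma HpSet.sub_mem (hp1 : 1 < (p : ℝ)) {x y : ℝ} (hx : x ∈ HpSet p) (hy : y ∈ HpSet p) :
    x - y ∈ HpSet p := by
  rw [sub_eq_add_neg]; exact HpSet.add_mem hp1 hx (HpSet.neg_mem hy)

lemma HpSet.mul_mem {x y : ℝ} (hx : x ∈ HpSet p) (hy : y ∈ HpSet p) : x * y ∈ HpSet p := by
  obtain ⟨a, n, rfl⟩ := hx; obtain ⟨b, m, rfl⟩ := hy
  refine ⟨a * b, n + m, ?_⟩
  push_cast
  rw [pow_add]
  ring

lemma HpSet.zero_mem : (0:ℝ) ∈ HpSet p := ⟨0, 0, by simp⟩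

lemma sl_mem (hp1 : 1 < (p : ℝ)) (k : ℤ) : sl p k ∈ HpSet p := by
  have key : ∀ j : ℤ, sl p (j + 1) = sl p j + (p:ℝ) ^ (-(j+1)) := by
    intro j
    have hpm1 := pm1_ne hp1
    have hpne := p_ne hp1
    unfold sl
    rw [div_add' _ _ _ hpm1, div_eq_div_iff hpm1 hpm1]
    have : (p:ℝ) ^ (-j) = (p:ℝ) ^ (-(j+1)) * (p:ℝ) := by
      rw [← zpow_add_one₀ hpne]; ring_nf
    rw [this]; ring
  induction k using Int.induction_on with
  | zero => simpa [sl] using (HpSet.zero_mem (p := p))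
  | succ j ih => rw [key j]; exact HpSet.add_mem hp1 ih (HpSet.zpow_mem hp1 _)
  | pred j ih =>
      have : sl p (-(j:ℤ) - 1) = sl p (-(j:ℤ)) - (p:ℝ) ^ (-(-(j:ℤ)-1+1)) := by
        have := key (-(j:ℤ) - 1); rw [sub_add_cancel] at this; rw [this]; ring_nf
      rw [this]
      exact HpSet.sub_mem hp1 ih (HpSet.zpow_mem hp1 _)
lemma sl_succ (hp1 : 1 < (p : ℝ)) (j : ℤ) : sl p (j + 1) = sl p j + (p:ℝ) ^ (-(j+1)) := by
  have hpm1 := pm1_ne hp1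
  have hpne := p_ne hp1
  unfold sl
  rw [div_add' _ _ _ hpm1, div_eq_div_iff hpm1 hpm1]
  have : (p:ℝ) ^ (-j) = (p:ℝ) ^ (-(j+1)) * (p:ℝ) := by
    rw [← zpow_add_one₀ hpne]; ring_nf
  rw [this]; ring

lemma geom_minus (hp1 : 1 < (p : ℝ)) (n : ℕ) :
    ∑ m ∈ Finset.range n, ((p:ℝ)^(m+1))⁻¹ = sl p n := by
  induction n with
  | zero => simp [sl]
  | succ n ih =>
      rw [Finset.sum_range_succ, ih, Nat.cast_add_one, sl_succ hp1]
      congr 1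

lemma theta_eq (hp1 : 1 < (p : ℝ)) (k : ℤ) {lam : ℝ}
    (h1 : (p:ℝ)^k ≤ lam) (h2 : lam ≤ (p:ℝ)^(k+1)) :
    theta p lam = sl p k * lam - k := by
  have hppos := p_pos hp1
  have hpne := p_ne hp1
  have hpm1 := pm1_ne hp1
  have hlam : 0 < lam := lt_of_lt_of_le (zpow_pos' hp1 k) h1
  rcases le_or_gt 0 k with hk | hk
  · -- k = n ≥ 0
    obtain ⟨n, rfl⟩ : ∃ n : ℕ, k = (n:ℤ) := ⟨k.toNat, (Int.toNat_of_nonneg hk).symm⟩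
    have h1' : (p:ℝ)^n ≤ lam := by rwa [zpow_natCast] at h1
    have h2' : lam ≤ (p:ℝ)^(n+1) := by
      rwa [show (n:ℤ)+1 = ((n+1:ℕ):ℤ) by push_cast; ring, zpow_natCast] at h2
    have hlam1 : (1:ℝ) ≤ lam := le_trans (one_le_pow₀ hp1.le) h1'
    have hfp : fPlus p lam = 0 := by
      unfold fPlus
      rw [tsum_eq_sum (s := ∅) ?_, Finset.sum_empty]
      intro m _
      refine max_eq_left (sub_nonpos.2 ?_)
      calc (1:ℝ) ≤ lam := hlam1
        _ = 1 * lam := (one_mul lam).symm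
        _ ≤ (p:ℝ)^m * lam := by
            apply mul_le_mul_of_nonneg_right (one_le_pow₀ hp1.le) hlam.le
    have hfm : fMinus p lam = ∑ m ∈ Finset.range n, (((p:ℝ)^(m+1))⁻¹ * lam - 1) := by
      unfold fMinus
      rw [tsum_eq_sum (s := Finset.range n) ?_]
      · refine Finset.sum_congr rfl fun m hm => ?_
        rw [Finset.mem_range] at hm
        refine max_eq_right (sub_nonneg.2 ?_)
        rw [inv_mul_eq_div, le_div_iff₀ (by positivity), one_mul]
        calc (p:ℝ)^(m+1) ≤ (p:ℝ)^n := pow_le_pow_right₀ hp1.le (by omega)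
          _ ≤ lam := h1'
      · intro m hm
        rw [Finset.mem_range, not_lt] at hm
        refine max_eq_left (sub_nonpos.2 ?_)
        rw [inv_mul_eq_div, div_le_one (by positivity)]
        calc lam ≤ (p:ℝ)^(n+1) := h2'
          _ ≤ (p:ℝ)^(m+1) := pow_le_pow_right₀ hp1.le (by omega)
    unfold theta
    rw [hfp, hfm, Finset.sum_sub_distrib, ← Finset.sum_mul, geom_minus hp1]
    simp
  · -- k = -(n+1)
    obtain ⟨n, rfl⟩ : ∃ n : ℕ, k = -((n:ℤ)+1) := by
      refine ⟨(-(k+1)).toNat, ?_⟩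
      rw [Int.toNat_of_nonneg (by omega)]; ring
    have h1' : ((p:ℝ)^(n+1))⁻¹ ≤ lam := by
      rw [← zpow_natCast (p:ℝ) (n+1)]
      push_cast
      rwa [zpow_neg] at h1
    have h2' : lam ≤ ((p:ℝ)^n)⁻¹ := by
      rw [← zpow_natCast (p:ℝ) n, ← zpow_neg]
      rwa [show -((n:ℤ)+1)+1 = -(n:ℤ) by ring] at h2
    have hfm : fMinus p lam = 0 := by
      unfold fMinus
      rw [tsum_eq_sum (s := ∅) ?_, Finset.sum_empty]
      intro m _
      refine max_eq_left (sub_nonpos.2 ?_)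
      rw [inv_mul_eq_div, div_le_one (by positivity)]
      calc lam ≤ ((p:ℝ)^n)⁻¹ := h2'
        _ ≤ 1 := inv_le_one_of_one_le₀ (one_le_pow₀ hp1.le)
        _ ≤ (p:ℝ)^(m+1) := one_le_pow₀ hp1.le
    have hfp : fPlus p lam = ∑ m ∈ Finset.range (n+1), (1 - (p:ℝ)^m * lam) := by
      unfold fPlus
      rw [tsum_eq_sum (s := Finset.range (n+1)) ?_]
      · refine Finset.sum_congr rfl fun m hm => ?_
        rw [Finset.mem_range] at hm
        refine max_eq_right (sub_nonneg.2 ?_)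
        calc (p:ℝ)^m * lam ≤ (p:ℝ)^m * ((p:ℝ)^n)⁻¹ :=
              mul_le_mul_of_nonneg_left h2' (by positivity)
          _ ≤ (p:ℝ)^n * ((p:ℝ)^n)⁻¹ := by
              apply mul_le_mul_of_nonneg_right (pow_le_pow_right₀ hp1.le (by omega))
              positivity
          _ = 1 := mul_inv_cancel₀ (by positivity)
      · intro m hm
        rw [Finset.mem_range, not_lt] at hm
        refine max_eq_left (sub_nonpos.2 ?_)
        calc (1:ℝ) = (p:ℝ)^(n+1) * ((p:ℝ)^(n+1))⁻¹ := (mul_inv_cancel₀ (by positivity)).symm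
          _ ≤ (p:ℝ)^m * ((p:ℝ)^(n+1))⁻¹ := by
              apply mul_le_mul_of_nonneg_right (pow_le_pow_right₀ hp1.le (by omega))
              positivity
          _ ≤ (p:ℝ)^m * lam := mul_le_mul_of_nonneg_left h1' (by positivity)
    unfold theta
    rw [hfp, hfm, Finset.sum_sub_distrib, ← Finset.sum_mul, geom_sum_eq (by linarith) (n+1)]
    have hsl : sl p (-((n:ℤ)+1)) = (1 - (p:ℝ)^(n+1)) / ((p:ℝ) - 1) := by
      unfold sl
      rw [show -(-((n:ℤ)+1)) = ((n+1:ℕ):ℤ) by push_cast; ring, zpow_natCast]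
    rw [hsl]
    push_cast
    field_simp
    simp only [Finset.sum_const, Finset.card_range, nsmul_eq_mul, mul_one, Nat.cast_add, Nat.cast_one]
    ring
lemma exists_bracket (hp1 : 1 < (p : ℝ)) {lam : ℝ} (hl : 0 < lam) :
    ∃ k : ℤ, (p:ℝ)^k ≤ lam ∧ lam < (p:ℝ)^(k+1) := by
  obtain ⟨k, hk⟩ := exists_mem_Ico_zpow hl hp1
  exact ⟨k, hk.1, hk.2⟩

lemma sl_rel (hp1 : 1 < (p : ℝ)) (k : ℤ) : sl p (k+1) * p = sl p k + 1 := by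
  have e : (p:ℝ)^(-(k+1)) * p = (p:ℝ)^(-k) := by
    rw [← zpow_add_one₀ (p_ne hp1)]; congr 1; ring
  have h2 : (1 - (p:ℝ)^(-k))/((p:ℝ)-1) + 1 = ((p:ℝ) - (p:ℝ)^(-k))/((p:ℝ)-1) := by
    rw [div_add_one (pm1_ne hp1)]; congr 1; ring
  have h3 : sl p (k+1) * p = ((p:ℝ) - (p:ℝ)^(-(k+1)) * (p:ℝ))/((p:ℝ)-1) := by
    unfold sl; ring
  rw [h3, e, ← h2]
  rfl

lemma sl_jump (hp1 : 1 < (p : ℝ)) (k : ℤ) : sl p k - sl p (k-1) = (p:ℝ)^(-k) := by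
  have := sl_succ hp1 (k-1)
  rw [sub_add_cancel] at this
  rw [this]; ring_nf

lemma theta_funeq (hp1 : 1 < (p : ℝ)) {lam : ℝ} (hl : 0 < lam) :
    theta p ((p:ℝ) * lam) = theta p lam + lam - 1 := by
  obtain ⟨k, h1, h2⟩ := exists_bracket hp1 hl
  have ha : (p:ℝ)^(k+1) ≤ (p:ℝ)*lam := by
    rw [zpow_add_one₀ (p_ne hp1), mul_comm]
    exact mul_le_mul_of_nonneg_left h1 (p_pos hp1).le
  have hb : (p:ℝ)*lam ≤ (p:ℝ)^(k+1+1) := by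
    rw [zpow_add_one₀ (p_ne hp1), mul_comm]
    exact mul_le_mul_of_nonneg_right h2.le (p_pos hp1).le
  rw [theta_eq hp1 (k+1) ha hb, theta_eq hp1 k h1 h2.le]
  push_cast
  linear_combination lam * sl_rel hp1 k

lemma ThetaF_funeq (hp1 : 1 < (p : ℝ)) {h μ lam : ℝ} (hh : 0 < h) (hμ : 0 < μ)
    (hl : 0 < lam) : ThetaF p h μ ((p:ℝ)*lam) = ThetaF p h μ lam + h * lam - μ := by
  unfold ThetaF
  have hx : 0 < μ⁻¹ * h * lam := by positivity
  rw [show μ⁻¹ * h * ((p:ℝ)*lam) = (p:ℝ) * (μ⁻¹ * h * lam) by ring, theta_funeq hp1 hx]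
  field_simp

lemma theta_hasRightSlope (hp1 : 1 < (p : ℝ)) {lam : ℝ} (hl : 0 < lam) :
    ∃ k : ℤ, (p:ℝ)^k ≤ lam ∧ lam < (p:ℝ)^(k+1) ∧ HasRightSlope (theta p) lam (sl p k) := by
  obtain ⟨k, h1, h2⟩ := exists_bracket hp1 hl
  refine ⟨k, h1, h2, (p:ℝ)^(k+1) - lam, by linarith, ?_⟩
  rintro y ⟨hy1, hy2⟩
  rw [theta_eq hp1 k (le_trans h1 hy1) (by linarith), theta_eq hp1 k h1 h2.le]
  ring

lemma theta_hasLeftSlope (hp1 : 1 < (p : ℝ)) {lam : ℝ} (hl : 0 < lam) :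
    ∃ k : ℤ, (p:ℝ)^k < lam ∧ lam ≤ (p:ℝ)^(k+1) ∧ HasLeftSlope (theta p) lam (sl p k) := by
  obtain ⟨k, h1, h2⟩ := exists_bracket hp1 hl
  rcases eq_or_lt_of_le h1 with heq | hlt
  · have hk1 : (p:ℝ)^(k-1) < (p:ℝ)^k := zpow_lt_zpow_right₀ hp1 (by omega)
    refine ⟨k-1, by rw [← heq]; exact hk1, by rw [sub_add_cancel]; exact heq.ge,
      (p:ℝ)^k - (p:ℝ)^(k-1), by linarith, ?_⟩
    rintro y ⟨hy1, hy2⟩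
    have hy1' : (p:ℝ)^(k-1) < y := by rw [← heq] at hy1; linarith
    have hy2' : y ≤ (p:ℝ)^(k-1+1) := by rw [sub_add_cancel]; exact hy2.trans heq.ge
    rw [theta_eq hp1 (k-1) hy1'.le hy2',
      show theta p lam = sl p (k-1) * lam - ((k-1:ℤ):ℝ) from
        theta_eq hp1 (k-1) (le_of_le_of_eq hk1.le heq)
          (by rw [sub_add_cancel]; exact heq.ge)]
    ring
  · refine ⟨k, hlt, h2.le, lam - (p:ℝ)^k, by linarith, ?_⟩
    rintro y ⟨hy1, hy2⟩
    rw [theta_eq hp1 k (by linarith) (by linarith), theta_eq hp1 k h1 h2.le]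
    ring

lemma ThetaF_hasRightSlope (hp1 : 1 < (p : ℝ)) {h μ lam : ℝ} (hh : 0 < h) (hμ : 0 < μ)
    (hl : 0 < lam) :
    ∃ k : ℤ, (p:ℝ)^k ≤ μ⁻¹*h*lam ∧ μ⁻¹*h*lam < (p:ℝ)^(k+1) ∧
      HasRightSlope (ThetaF p h μ) lam (h * sl p k) := by
  have hx : 0 < μ⁻¹ * h * lam := by positivity
  obtain ⟨k, h1, h2, δ, hδ, hs⟩ := theta_hasRightSlope hp1 hx
  refine ⟨k, h1, h2, δ * μ / h, by positivity, ?_⟩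
  rintro y ⟨hy1, hy2⟩
  have hmem : μ⁻¹ * h * y ∈ Set.Ico (μ⁻¹*h*lam) (μ⁻¹*h*lam + δ) := by
    constructor
    · apply mul_le_mul_of_nonneg_left hy1 (by positivity)
    · have h3 : μ⁻¹*h*y < μ⁻¹*h*(lam + δ*μ/h) := by
        apply mul_lt_mul_of_pos_left hy2 (by positivity)
      have h4 : μ⁻¹*h*(lam + δ*μ/h) = μ⁻¹*h*lam + δ := by field_simp
      linarith [h4 ▸ h3]
  have := hs _ hmem
  unfold ThetaF
  rw [this]
  field_simp

lemma ThetaF_hasLeftSlope (hp1 : 1 < (p : ℝ)) {h μ lam : ℝ} (hh : 0 < h) (hμ : 0 < μ)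
    (hl : 0 < lam) :
    ∃ k : ℤ, (p:ℝ)^k < μ⁻¹*h*lam ∧ μ⁻¹*h*lam ≤ (p:ℝ)^(k+1) ∧
      HasLeftSlope (ThetaF p h μ) lam (h * sl p k) := by
  have hx : 0 < μ⁻¹ * h * lam := by positivity
  obtain ⟨k, h1, h2, δ, hδ, hs⟩ := theta_hasLeftSlope hp1 hx
  refine ⟨k, h1, h2, δ * μ / h, by positivity, ?_⟩
  rintro y ⟨hy1, hy2⟩
  have hmem : μ⁻¹ * h * y ∈ Set.Ioc (μ⁻¹*h*lam - δ) (μ⁻¹*h*lam) := by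
    constructor
    · have h3 : μ⁻¹*h*(lam - δ*μ/h) < μ⁻¹*h*y := by
        apply mul_lt_mul_of_pos_left hy1 (by positivity)
      have h4 : μ⁻¹*h*(lam - δ*μ/h) = μ⁻¹*h*lam - δ := by field_simp
      linarith [h4 ▸ h3]
    · apply mul_le_mul_of_nonneg_left hy2 (by positivity)
  have := hs _ hmem
  unfold ThetaF
  rw [this]
  field_simp
lemma HasRightSlope.addF {f g : ℝ → ℝ} {x s t : ℝ} (hf : HasRightSlope f x s)
    (hg : HasRightSlope g x t) : HasRightSlope (fun y => f y + g y) x (s + t) := by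
  obtain ⟨δ₁, hδ₁, h₁⟩ := hf
  obtain ⟨δ₂, hδ₂, h₂⟩ := hg
  refine ⟨min δ₁ δ₂, lt_min hδ₁ hδ₂, ?_⟩
  rintro y ⟨hy1, hy2⟩
  show f y + g y = f x + g x + (s + t) * (y - x)
  rw [h₁ y ⟨hy1, by have := min_le_left δ₁ δ₂; linarith⟩,
    h₂ y ⟨hy1, by have := min_le_right δ₁ δ₂; linarith⟩]
  ring

lemma HasLeftSlope.addF {f g : ℝ → ℝ} {x s t : ℝ} (hf : HasLeftSlope f x s)
    (hg : HasLeftSlope g x t) : HasLeftSlope (fun y => f y + g y) x (s + t) := by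
  obtain ⟨δ₁, hδ₁, h₁⟩ := hf
  obtain ⟨δ₂, hδ₂, h₂⟩ := hg
  refine ⟨min δ₁ δ₂, lt_min hδ₁ hδ₂, ?_⟩
  rintro y ⟨hy1, hy2⟩
  show f y + g y = f x + g x + (s + t) * (y - x)
  rw [h₁ y ⟨by have := min_le_left δ₁ δ₂; linarith, hy2⟩,
    h₂ y ⟨by have := min_le_right δ₁ δ₂; linarith, hy2⟩]
  ring

lemma HasRightSlope.negF {f : ℝ → ℝ} {x s : ℝ} (hf : HasRightSlope f x s) :
    HasRightSlope (fun y => -f y) x (-s) := by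
  obtain ⟨δ, hδ, h⟩ := hf
  exact ⟨δ, hδ, fun y hy => by show -f y = -f x + -s * (y - x); rw [h y hy]; ring⟩

lemma HasLeftSlope.negF {f : ℝ → ℝ} {x s : ℝ} (hf : HasLeftSlope f x s) :
    HasLeftSlope (fun y => -f y) x (-s) := by
  obtain ⟨δ, hδ, h⟩ := hf
  exact ⟨δ, hδ, fun y hy => by show -f y = -f x + -s * (y - x); rw [h y hy]; ring⟩

lemma HasRightSlope.subF {f g : ℝ → ℝ} {x s t : ℝ} (hf : HasRightSlope f x s)
    (hg : HasRightSlope g x t) : HasRightSlope (fun y => f y - g y) x (s - t) := by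
  have := hf.addF hg.negF
  simpa [sub_eq_add_neg] using this

lemma HasLeftSlope.subF {f g : ℝ → ℝ} {x s t : ℝ} (hf : HasLeftSlope f x s)
    (hg : HasLeftSlope g x t) : HasLeftSlope (fun y => f y - g y) x (s - t) := by
  have := hf.addF hg.negF
  simpa [sub_eq_add_neg] using this

lemma hasRightSlope_linear (c x : ℝ) : HasRightSlope (fun y => c * y) x c :=
  ⟨1, one_pos, fun y _ => by ring⟩

lemma hasLeftSlope_linear (c x : ℝ) : HasLeftSlope (fun y => c * y) x c :=
  ⟨1, one_pos, fun y _ => by ring⟩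

lemma hasRightSlope_sum {ι : Type*} (s : Finset ι) (f : ι → ℝ → ℝ) (g : ι → ℝ) (x : ℝ)
    (h : ∀ i ∈ s, HasRightSlope (f i) x (g i)) :
    HasRightSlope (fun y => ∑ i ∈ s, f i y) x (∑ i ∈ s, g i) := by
  classical
  induction s using Finset.induction with
  | empty => exact ⟨1, one_pos, by simp⟩
  | insert _ _ hnm ih =>
      rename_i a s'
      simp only [Finset.sum_insert hnm]
      exact (h a (Finset.mem_insert_self a s')).addF
        (ih fun i hi => h i (Finset.mem_insert_of_mem hi))

lemma hasLeftSlope_sum {ι : Type*} (s : Finset ι) (f : ι → ℝ → ℝ) (g : ι → ℝ) (x : ℝ)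
    (h : ∀ i ∈ s, HasLeftSlope (f i) x (g i)) :
    HasLeftSlope (fun y => ∑ i ∈ s, f i y) x (∑ i ∈ s, g i) := by
  classical
  induction s using Finset.induction with
  | empty => exact ⟨1, one_pos, by simp⟩
  | insert _ _ hnm ih =>
      rename_i a s'
      simp only [Finset.sum_insert hnm]
      exact (h a (Finset.mem_insert_self a s')).addF
        (ih fun i hi => h i (Finset.mem_insert_of_mem hi))

lemma HasRightSlope.cwa {f : ℝ → ℝ} {x s : ℝ} (hf : HasRightSlope f x s) :
    ContinuousWithinAt f (Set.Ici x) x := by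
  obtain ⟨δ, hδ, h⟩ := hf
  have heq : f =ᶠ[nhdsWithin x (Set.Ici x)] fun y => f x + s * (y - x) := by
    filter_upwards [Ico_mem_nhdsGE_of_mem
      (show x ∈ Set.Ico x (x + δ) from ⟨le_refl x, by linarith⟩)] with y hy
    exact h y hy
  have hc : ContinuousWithinAt (fun y => f x + s * (y - x)) (Set.Ici x) x := by
    exact (Continuous.continuousWithinAt (by fun_prop))
  exact hc.congr_of_eventuallyEq heq (by simp)

lemma HasLeftSlope.cwa {f : ℝ → ℝ} {x s : ℝ} (hf : HasLeftSlope f x s) :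
    ContinuousWithinAt f (Set.Iic x) x := by
  obtain ⟨δ, hδ, h⟩ := hf
  have heq : f =ᶠ[nhdsWithin x (Set.Iic x)] fun y => f x + s * (y - x) := by
    filter_upwards [Ioc_mem_nhdsLE_of_mem
      (show x ∈ Set.Ioc (x - δ) x from ⟨by linarith, le_refl x⟩)] with y hy
    exact h y hy
  have hc : ContinuousWithinAt (fun y => f x + s * (y - x)) (Set.Iic x) x := by
    exact (Continuous.continuousWithinAt (by fun_prop))
  exact hc.congr_of_eventuallyEq heq (by simp)

lemma continuousAt_of_slopes {f : ℝ → ℝ} {x sp sm : ℝ} (hr : HasRightSlope f x sp)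
    (hl : HasLeftSlope f x sm) : ContinuousAt f x := by
  rw [← continuousWithinAt_univ, ← Set.Iic_union_Ici (a := x)]
  exact hl.cwa.union hr.cwa
open Classical in
lemma jump_eq (hp1 : 1 < (p : ℝ)) {h μ lam : ℝ} (hh : 0 < h) (hμ : 0 < μ) (hl : 0 < lam)
    {kr kl : ℤ}
    (h1 : (p:ℝ)^kr ≤ μ⁻¹*h*lam) (h2 : μ⁻¹*h*lam < (p:ℝ)^(kr+1))
    (h3 : (p:ℝ)^kl < μ⁻¹*h*lam) (h4 : μ⁻¹*h*lam ≤ (p:ℝ)^(kl+1)) :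
    lam * (h * sl p kr - h * sl p kl) =
      if ∃ kk : ℤ, lam = (p:ℝ)^kk * (μ / h) then μ else 0 := by
  set x := μ⁻¹*h*lam with hx
  have hlamx : lam = x * (μ/h) := by rw [hx]; field_simp
  have hlameq : ∀ kk : ℤ, (lam = (p:ℝ)^kk * (μ/h) ↔ x = (p:ℝ)^kk) := by
    intro kk
    constructor
    · intro he; rw [hx, he]; field_simp
    · intro he; rw [hlamx, he]
  by_cases hcase : ∃ kk : ℤ, lam = (p:ℝ)^kk * (μ / h)
  · obtain ⟨m, hm⟩ := hcase
    have hxm : x = (p:ℝ)^m := (hlameq m).1 hm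
    rw [if_pos ⟨m, hm⟩]
    have hkr : kr = m := by
      have b1 : kr ≤ m := (zpow_le_zpow_iff_right₀ hp1).1 (hxm ▸ h1)
      have b2 : m < kr+1 := (zpow_lt_zpow_iff_right₀ hp1).1 (hxm ▸ h2)
      omega
    have hkl : kl = m - 1 := by
      have b1 : kl < m := (zpow_lt_zpow_iff_right₀ hp1).1 (hxm ▸ h3)
      have b2 : m ≤ kl+1 := (zpow_le_zpow_iff_right₀ hp1).1 (hxm ▸ h4)
      omega
    have hμh : μ / h * h = μ := div_mul_cancel₀ μ (ne_of_gt hh)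
    have hpp : (p:ℝ)^m * (p:ℝ)^(-m) = 1 := by
      rw [← zpow_add₀ (p_ne hp1)]; simp
    rw [hkr, hkl, hm]
    calc (p:ℝ)^m * (μ/h) * (h * sl p m - h * sl p (m-1))
        = (μ/h*h) * ((p:ℝ)^m * (sl p m - sl p (m-1))) := by ring
      _ = μ * ((p:ℝ)^m * (p:ℝ)^(-m)) := by rw [hμh, sl_jump hp1 m]
      _ = μ := by rw [hpp, mul_one]
  · rw [if_neg hcase]
    have hk : kr = kl := by
      by_contra hne
      rcases lt_or_gt_of_ne hne with hlt | hgt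
      · have := zpow_le_zpow_right₀ hp1.le (show kr+1 ≤ kl by omega)
        linarith
      · have e1 : (p:ℝ)^(kl+1) ≤ (p:ℝ)^kr := zpow_le_zpow_right₀ hp1.le (by omega)
        exact hcase ⟨kr, (hlameq kr).2 (le_antisymm (by linarith) h1)⟩
    rw [hk]; ring

lemma ThetaF_affine (hp1 : 1 < (p : ℝ)) {h μ a b : ℝ} (hh : 0 < h) (hμ : 0 < μ)
    (ha : 0 < a) (hab : a ≤ b)
    (hnb : ∀ x ∈ Set.Ioo a b, ¬∃ m : ℤ, x = (p:ℝ)^m * (μ/h)) :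
    ∃ k : ℤ, ∀ x ∈ Set.Icc a b, ThetaF p h μ x = (h * sl p k) * x - μ * k := by
  have hca : 0 < μ⁻¹*h*a := by positivity
  obtain ⟨k, h1, h2⟩ := exists_bracket hp1 hca
  have hcb : μ⁻¹*h*b ≤ (p:ℝ)^(k+1) := by
    by_contra hc
    push_neg at hc
    refine hnb ((p:ℝ)^(k+1) * (μ/h)) ⟨?_, ?_⟩ ⟨k+1, rfl⟩
    · have := mul_lt_mul_of_pos_right h2 (show 0 < μ/h by positivity)
      calc a = μ⁻¹*h*a * (μ/h) := by field_simp
        _ < (p:ℝ)^(k+1) * (μ/h) := this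
    · have := mul_lt_mul_of_pos_right hc (show 0 < μ/h by positivity)
      calc (p:ℝ)^(k+1) * (μ/h) < μ⁻¹*h*b * (μ/h) := this
        _ = b := by field_simp
  refine ⟨k, ?_⟩
  rintro x ⟨hx1, hx2⟩
  have e1 : (p:ℝ)^k ≤ μ⁻¹*h*x :=
    le_trans h1 (mul_le_mul_of_nonneg_left hx1 (by positivity))
  have e2 : μ⁻¹*h*x ≤ (p:ℝ)^(k+1) :=
    le_trans (mul_le_mul_of_nonneg_left hx2 (by positivity)) hcb
  unfold ThetaF
  rw [theta_eq hp1 k e1 e2]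
  field_simp

lemma finite_break (hp1 : 1 < (p : ℝ)) {c u v : ℝ} (hc : 0 < c) (hu : 0 < u) :
    {x : ℝ | x ∈ Set.Icc u v ∧ ∃ m : ℤ, x = (p:ℝ)^m * c}.Finite := by
  rcases lt_or_ge v u with huv | huv
  · apply Set.Finite.subset (Set.finite_empty)
    rintro x ⟨hx, -⟩
    rw [Set.Icc_eq_empty (not_le.2 huv)] at hx
    exact hx
  · have hv : 0 < v := lt_of_lt_of_le hu huv
    obtain ⟨L, hL1, -⟩ := exists_bracket hp1 (show 0 < u/c by positivity)
    obtain ⟨M, -, hM2⟩ := exists_bracket hp1 (show 0 < v/c by positivity)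
    apply Set.Finite.subset ((Set.finite_Icc L M).image (fun m => (p:ℝ)^m * c))
    rintro x ⟨⟨hx1, hx2⟩, m, rfl⟩
    refine ⟨m, ⟨?_, ?_⟩, rfl⟩
    · have : u/c ≤ (p:ℝ)^m := (div_le_iff₀ hc).2 hx1
      exact (zpow_le_zpow_iff_right₀ hp1).1 (le_trans hL1 this)
    · have : (p:ℝ)^m ≤ v/c := (le_div_iff₀ hc).2 hx2
      have := (zpow_lt_zpow_iff_right₀ hp1).1 (lt_of_le_of_lt this hM2)
      omega
lemma HpSet.sum_mem (hp1 : 1 < (p : ℝ)) {ι : Type*} (s : Finset ι) (g : ι → ℝ)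
    (h : ∀ i ∈ s, g i ∈ HpSet p) : (∑ i ∈ s, g i) ∈ HpSet p := by
  classical
  induction s using Finset.induction with
  | empty => simpa using (HpSet.zero_mem (p := p))
  | insert _ _ hnm ih =>
      rename_i a s'
      rw [Finset.sum_insert hnm]
      exact HpSet.add_mem hp1 (h a (Finset.mem_insert_self a s'))
        (ih fun i hi => h i (Finset.mem_insert_of_mem hi))

lemma exists_partition {B : Set ℝ} (hB : B.Finite) {u v : ℝ} (huv : u < v)
    (huB : u ∈ B) (hvB : v ∈ B) (hsub : B ⊆ Set.Icc u v) :
    ∃ (n : ℕ) (t : ℕ → ℝ), 0 < n ∧ t 0 = u ∧ t n = v ∧ (∀ i < n, t i < t (i+1)) ∧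
      (∀ i < n, ∀ x ∈ Set.Ioo (t i) (t (i+1)), x ∉ B) ∧
      (∀ i, u ≤ t i ∧ t i ≤ v) := by
  classical
  set F : Finset ℝ := hB.toFinset with hF
  have hmemF : ∀ x : ℝ, x ∈ F ↔ x ∈ B := fun x => hB.mem_toFinset
  have huF : u ∈ F := (hmemF u).2 huB
  have hvF : v ∈ F := (hmemF v).2 hvB
  have h2 : 2 ≤ F.card := by
    have hss : ({u, v} : Finset ℝ) ⊆ F := by
      intro x hx
      rcases Finset.mem_insert.1 hx with rfl | hx
      · exact huF
      · rw [Finset.mem_singleton] at hx; subst hx; exact hvF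
    have := Finset.card_le_card hss
    rwa [Finset.card_insert_of_notMem (by simp [ne_of_lt huv]),
      Finset.card_singleton] at this
  set n : ℕ := F.card - 1 with hn
  have hcard : F.card = n + 1 := by omega
  set e := F.orderIsoOfFin hcard with he
  set t : ℕ → ℝ := fun i => (e ⟨min i n, by omega⟩ : ℝ) with ht
  have htmem : ∀ i, (t i) ∈ F := fun i => (e ⟨min i n, by omega⟩).2
  have hlt_iff : ∀ a b : Fin (n+1), ((e a : ℝ) < (e b : ℝ)) ↔ a < b := by
    intro a b
    exact Iff.trans Subtype.coe_lt_coe e.lt_iff_lt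
  have hmono : ∀ a b : Fin (n+1), a ≤ b → (e a : ℝ) ≤ (e b : ℝ) :=
    fun a b hab => Subtype.coe_le_coe.2 (e.monotone hab)
  have hbound : ∀ i, u ≤ t i ∧ t i ≤ v := by
    intro i
    have := hsub ((hmemF _).1 (htmem i))
    exact ⟨this.1, this.2⟩
  have ht0 : t 0 = u := by
    obtain ⟨j, hj⟩ : ∃ j : Fin (n+1), (e j : ℝ) = u := ⟨e.symm ⟨u, huF⟩, by simp⟩
    have h2' : t 0 ≤ u := by
      rw [← hj]
      exact hmono _ _ (Fin.le_def.2 (by simp))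
    linarith [(hbound 0).1]
  have htn : t n = v := by
    obtain ⟨j, hj⟩ : ∃ j : Fin (n+1), (e j : ℝ) = v := ⟨e.symm ⟨v, hvF⟩, by simp⟩
    have h2' : v ≤ t n := by
      rw [← hj]
      apply hmono
      exact Fin.le_def.2 (by simp [Nat.lt_succ_iff.1 j.2])
    linarith [(hbound n).2]
  have hstrict : ∀ i < n, t i < t (i+1) := by
    intro i hi
    apply (hlt_iff _ _).2
    rw [Fin.lt_def]
    simp [min_eq_left hi.le, min_eq_left (by omega : i + 1 ≤ n)]
  have hpos : 0 < n := by
    by_contra hc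
    push_neg at hc
    have hn0 : n = 0 := by omega
    rw [hn0] at htn
    exact ne_of_lt huv (ht0.symm.trans htn)
  refine ⟨n, t, hpos, ht0, htn, hstrict, ?_, hbound⟩
  intro i hi x hx hxB
  obtain ⟨j, hj⟩ : ∃ j : Fin (n+1), (e j : ℝ) = x := ⟨e.symm ⟨x, (hmemF x).2 hxB⟩, by simp⟩
  have l1 : (⟨min i n, by omega⟩ : Fin (n+1)) < j := by
    apply (hlt_iff _ _).1
    rw [hj]
    exact hx.1
  have l2 : j < (⟨min (i+1) n, by omega⟩ : Fin (n+1)) := by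
    apply (hlt_iff _ _).1
    rw [hj]
    exact hx.2
  rw [Fin.lt_def] at l1 l2
  simp [min_eq_left hi.le, min_eq_left (by omega : i + 1 ≤ n)] at l1 l2
  omega

open Classical in
/-- `Θ_{h,μ}(pλ) = Θ_{h,μ}(λ) + hλ − μ`; and for finite families `(h_i, μ_i)`,
`(h'_j, μ'_j)` with `Σμ_i − Σμ'_j = 0` and `h ∈ H_p` with `(p−1)h = Σh_i − Σh'_j`, the function
`f(λ) = ΣΘ_{h_i,μ_i}(λ) − ΣΘ_{h'_j,μ'_j}(λ) − hλ` is continuous, piecewise affine with slopes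
in `H_p`, satisfies `f(pλ) = f(λ)`, and its order at every `λ > 0` is
`Σ_{i : λ ∈ p^ℤ·(μ_i/h_i)} μ_i − Σ_{j : λ ∈ p^ℤ·(μ'_j/h'_j)} μ'_j`. -/
theorem statement9 (p : ℕ) (hp : p.Prime) :
    (∀ h : ℝ, h ∈ HpSet p → 0 < h → ∀ μ : ℝ, 0 < μ → ∀ lam : ℝ, 0 < lam →
      ThetaF p h μ (p * lam) = ThetaF p h μ lam + h * lam - μ) ∧
    (∀ (k l : ℕ) (hs μs : Fin k → ℝ) (hs' μs' : Fin l → ℝ) (h : ℝ),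
      (∀ i, hs i ∈ HpSet p ∧ 0 < hs i ∧ 0 < μs i) →
      (∀ j, hs' j ∈ HpSet p ∧ 0 < hs' j ∧ 0 < μs' j) →
      (∑ i, μs i) - (∑ j, μs' j) = 0 →
      h ∈ HpSet p → ((p : ℝ) - 1) * h = (∑ i, hs i) - (∑ j, hs' j) →
      (ContinuousOn
          (fun lam => (∑ i, ThetaF p (hs i) (μs i) lam)
            - (∑ j, ThetaF p (hs' j) (μs' j) lam) - h * lam) (Set.Ioi 0) ∧
        PiecewiseAffineWith (HpSet p)
          (fun lam => (∑ i, ThetaF p (hs i) (μs i) lam)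
            - (∑ j, ThetaF p (hs' j) (μs' j) lam) - h * lam) ∧
        (∀ lam : ℝ, 0 < lam →
          (∑ i, ThetaF p (hs i) (μs i) (p * lam))
            - (∑ j, ThetaF p (hs' j) (μs' j) (p * lam)) - h * (p * lam)
          = (∑ i, ThetaF p (hs i) (μs i) lam)
            - (∑ j, ThetaF p (hs' j) (μs' j) lam) - h * lam) ∧
        (∀ lam : ℝ, 0 < lam →
          HasOrdAt
            (fun lam => (∑ i, ThetaF p (hs i) (μs i) lam)
              - (∑ j, ThetaF p (hs' j) (μs' j) lam) - h * lam)
            lam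
            ((∑ i ∈ Finset.univ.filter
                (fun i => ∃ kk : ℤ, lam = (p : ℝ) ^ kk * (μs i / hs i)), μs i)
             - (∑ j ∈ Finset.univ.filter
                (fun j => ∃ kk : ℤ, lam = (p : ℝ) ^ kk * (μs' j / hs' j)), μs' j))))) := by
  have hp1 : 1 < (p : ℝ) := by exact_mod_cast hp.one_lt
  constructor
  · intro h _ hh μ hμ lam hlam
    exact ThetaF_funeq hp1 hh hμ hlam
  · intro k l hs μs hs' μs' h hfam hfam' hμsum hhmem hhsum
    refine ⟨?_, ?_, ?_, ?_⟩
    · -- continuity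
      intro lam hlam
      have hlam' : 0 < lam := hlam
      apply ContinuousAt.continuousWithinAt
      choose kR hkR1 hkR2 hkR3 using fun i : Fin k =>
        ThetaF_hasRightSlope hp1 (hfam i).2.1 (hfam i).2.2 hlam'
      choose kR' hkR1' hkR2' hkR3' using fun j : Fin l =>
        ThetaF_hasRightSlope hp1 (hfam' j).2.1 (hfam' j).2.2 hlam'
      choose kL hkL1 hkL2 hkL3 using fun i : Fin k =>
        ThetaF_hasLeftSlope hp1 (hfam i).2.1 (hfam i).2.2 hlam'
      choose kL' hkL1' hkL2' hkL3' using fun j : Fin l =>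
        ThetaF_hasLeftSlope hp1 (hfam' j).2.1 (hfam' j).2.2 hlam'
      have hfr := ((hasRightSlope_sum Finset.univ _ _ lam fun i _ => hkR3 i).subF
        (hasRightSlope_sum Finset.univ _ _ lam fun j _ => hkR3' j)).subF
        (hasRightSlope_linear h lam)
      have hfl := ((hasLeftSlope_sum Finset.univ _ _ lam fun i _ => hkL3 i).subF
        (hasLeftSlope_sum Finset.univ _ _ lam fun j _ => hkL3' j)).subF
        (hasLeftSlope_linear h lam)
      exact continuousAt_of_slopes hfr hfl
    · -- piecewise affine
      intro u v hu huv
      set B : Set ℝ := {u, v} ∪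
        ((⋃ i : Fin k, {x : ℝ | x ∈ Set.Icc u v ∧ ∃ m : ℤ, x = (p:ℝ)^m * (μs i / hs i)}) ∪
         (⋃ j : Fin l, {x : ℝ | x ∈ Set.Icc u v ∧ ∃ m : ℤ, x = (p:ℝ)^m * (μs' j / hs' j)}))
        with hB
      have hBfin : B.Finite := by
        refine Set.Finite.union ((Set.finite_singleton v).insert u)
          (Set.Finite.union ?_ ?_)
        · exact Set.finite_iUnion fun i => finite_break hp1
            (div_pos (hfam i).2.2 (hfam i).2.1) hu
        · exact Set.finite_iUnion fun j => finite_break hp1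
            (div_pos (hfam' j).2.2 (hfam' j).2.1) hu
      have huB : u ∈ B := Or.inl (Or.inl rfl)
      have hvB : v ∈ B := Or.inl (Or.inr rfl)
      have hsub : B ⊆ Set.Icc u v := by
        rintro x (hx | hx)
        · rcases hx with rfl | hx
          · exact ⟨le_refl x, huv.le⟩
          · rw [Set.mem_singleton_iff] at hx; subst hx; exact ⟨huv.le, le_refl x⟩
        · rcases hx with hx | hx <;>
          · obtain ⟨i, hi⟩ := Set.mem_iUnion.1 hx
            exact hi.1
      obtain ⟨n, t, hn, ht0, htn, hmono, hgap, hbd⟩ := exists_partition hBfin huv huB hvB hsub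
      refine ⟨n, t, hn, ht0, htn, hmono, ?_⟩
      intro i hi
      have hti : 0 < t i := lt_of_lt_of_le hu (hbd i).1
      have htile : t i ≤ t (i+1) := (hmono i hi).le
      have hIoo : ∀ x ∈ Set.Ioo (t i) (t (i+1)), x ∈ Set.Icc u v := by
        rintro x ⟨hx1, hx2⟩
        exact ⟨le_trans (hbd i).1 hx1.le, le_trans hx2.le (hbd (i+1)).2⟩
      have haffI : ∀ i' : Fin k, ∃ kk : ℤ, ∀ x ∈ Set.Icc (t i) (t (i+1)),
          ThetaF p (hs i') (μs i') x = (hs i' * sl p kk) * x - μs i' * kk := by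
        intro i'
        apply ThetaF_affine hp1 (hfam i').2.1 (hfam i').2.2 hti htile
        intro x hx hex
        exact hgap i hi x hx (Or.inr (Or.inl (Set.mem_iUnion.2 ⟨i', ⟨hIoo x hx, hex⟩⟩)))
      have haffJ : ∀ j' : Fin l, ∃ kk : ℤ, ∀ x ∈ Set.Icc (t i) (t (i+1)),
          ThetaF p (hs' j') (μs' j') x = (hs' j' * sl p kk) * x - μs' j' * kk := by
        intro j'
        apply ThetaF_affine hp1 (hfam' j').2.1 (hfam' j').2.2 hti htile
        intro x hx hex
        exact hgap i hi x hx (Or.inr (Or.inr (Set.mem_iUnion.2 ⟨j', ⟨hIoo x hx, hex⟩⟩)))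
      choose kkI hkkI using haffI
      choose kkJ hkkJ using haffJ
      refine ⟨(∑ i', hs i' * sl p (kkI i')) - (∑ j', hs' j' * sl p (kkJ j')) - h,
        HpSet.sub_mem hp1 (HpSet.sub_mem hp1
          (HpSet.sum_mem hp1 _ _ fun i' _ => HpSet.mul_mem (hfam i').1 (sl_mem hp1 _))
          (HpSet.sum_mem hp1 _ _ fun j' _ => HpSet.mul_mem (hfam' j').1 (sl_mem hp1 _)))
          hhmem,
        (∑ j', μs' j' * kkJ j') - (∑ i', μs i' * kkI i'), ?_⟩
      intro x hx
      show (∑ i' : Fin k, ThetaF p (hs i') (μs i') x)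
          - (∑ j' : Fin l, ThetaF p (hs' j') (μs' j') x) - h * x = _
      rw [Finset.sum_congr rfl fun i' _ => hkkI i' x hx,
          Finset.sum_congr rfl fun j' _ => hkkJ j' x hx,
          Finset.sum_sub_distrib, Finset.sum_sub_distrib,
          ← Finset.sum_mul, ← Finset.sum_mul]
      ring
    · -- functional equation
      intro lam hlam
      have e1 : (∑ i, ThetaF p (hs i) (μs i) ((p:ℝ) * lam))
          = (∑ i, ThetaF p (hs i) (μs i) lam) + (∑ i, hs i) * lam - (∑ i, μs i) := by
        rw [Finset.sum_congr rfl fun i _ => ThetaF_funeq hp1 (hfam i).2.1 (hfam i).2.2 hlam,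
          Finset.sum_sub_distrib, Finset.sum_add_distrib, ← Finset.sum_mul]
      have e2 : (∑ j, ThetaF p (hs' j) (μs' j) ((p:ℝ) * lam))
          = (∑ j, ThetaF p (hs' j) (μs' j) lam) + (∑ j, hs' j) * lam - (∑ j, μs' j) := by
        rw [Finset.sum_congr rfl fun j _ => ThetaF_funeq hp1 (hfam' j).2.1 (hfam' j).2.2 hlam,
          Finset.sum_sub_distrib, Finset.sum_add_distrib, ← Finset.sum_mul]
      rw [e1, e2]
      linear_combination (-lam) * hhsum - hμsum
    · -- order
      intro lam hlam
      choose kR hkR1 hkR2 hkR3 using fun i : Fin k =>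
        ThetaF_hasRightSlope hp1 (hfam i).2.1 (hfam i).2.2 hlam
      choose kR' hkR1' hkR2' hkR3' using fun j : Fin l =>
        ThetaF_hasRightSlope hp1 (hfam' j).2.1 (hfam' j).2.2 hlam
      choose kL hkL1 hkL2 hkL3 using fun i : Fin k =>
        ThetaF_hasLeftSlope hp1 (hfam i).2.1 (hfam i).2.2 hlam
      choose kL' hkL1' hkL2' hkL3' using fun j : Fin l =>
        ThetaF_hasLeftSlope hp1 (hfam' j).2.1 (hfam' j).2.2 hlam
      refine ⟨(∑ i, hs i * sl p (kR i)) - (∑ j, hs' j * sl p (kR' j)) - h,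
        (∑ i, hs i * sl p (kL i)) - (∑ j, hs' j * sl p (kL' j)) - h,
        ((hasRightSlope_sum Finset.univ _ _ lam fun i _ => hkR3 i).subF
          (hasRightSlope_sum Finset.univ _ _ lam fun j _ => hkR3' j)).subF
          (hasRightSlope_linear h lam),
        ((hasLeftSlope_sum Finset.univ _ _ lam fun i _ => hkL3 i).subF
          (hasLeftSlope_sum Finset.univ _ _ lam fun j _ => hkL3' j)).subF
          (hasLeftSlope_linear h lam), ?_⟩
      have eI : ∀ i : Fin k,
          (if ∃ kk : ℤ, lam = (p:ℝ)^kk * (μs i / hs i) then μs i else (0:ℝ))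
          = lam * (hs i * sl p (kR i) - hs i * sl p (kL i)) := fun i =>
        (jump_eq hp1 (hfam i).2.1 (hfam i).2.2 hlam (hkR1 i) (hkR2 i) (hkL1 i) (hkL2 i)).symm
      have eJ : ∀ j : Fin l,
          (if ∃ kk : ℤ, lam = (p:ℝ)^kk * (μs' j / hs' j) then μs' j else (0:ℝ))
          = lam * (hs' j * sl p (kR' j) - hs' j * sl p (kL' j)) := fun j =>
        (jump_eq hp1 (hfam' j).2.1 (hfam' j).2.2 hlam (hkR1' j) (hkR2' j) (hkL1' j)
          (hkL2' j)).symm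
      rw [Finset.sum_filter, Finset.sum_filter,
        Finset.sum_congr rfl fun i _ => eI i, Finset.sum_congr rfl fun j _ => eJ j,
        ← Finset.mul_sum, ← Finset.mul_sum, Finset.sum_sub_distrib, Finset.sum_sub_distrib]
      ring
end Helpers
end

section
/- Fix a prime p and an integer N > p. Then: (a) for every integer a with 1 ≤ a ≤ N−p, the function φ_a belongs to E_{N,p}; (b) for every ε with 0 < ε ≤ (p−1)/(N−p+1), the map h sending (t_0, t_1, …, t_{N−p}) with t_0 ∈ ℝ and 0 < t_1 < … < t_{N−p} < ε to the function h(t_0,…,t_{N−p})(x) := max_{0 ≤ j ≤ N−p} (φ_{N−p−j}(x) − Σ_{i=0}^{j} t_i) takes values in E_{N,p} and is injective and continuous with respect to the supremum distance d(f,g) = max_{x∈[1,p]} |f(x) − g(x)| on E_{N,p}. -/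
/-- The `ℝ_max`-module `E_{N,p}`: continuous convex piecewise affine functions `f : [1,p] → ℝ`
with integral slopes such that `f(1) = f(p)` and `−f'₊(1) + p·f'₋(p) ≤ N`. -/
def ENp (p N : ℕ) (f : ℝ → ℝ) : Prop :=
  ContinuousOn f (Set.Icc 1 p) ∧ ConvexOn ℝ (Set.Icc 1 (p : ℝ)) f ∧
  (∃ (n : ℕ) (t : ℕ → ℝ), 0 < n ∧ t 0 = 1 ∧ t n = p ∧ (∀ i < n, t i < t (i + 1)) ∧
    ∀ i < n, ∃ (m : ℤ) (c : ℝ), ∀ x ∈ Set.Icc (t i) (t (i + 1)), f x = (m : ℝ) * x + c) ∧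
  f 1 = f p ∧
  (∃ s1 sp : ℝ, HasRightSlope f 1 s1 ∧ HasLeftSlope f p sp ∧ -s1 + p * sp ≤ N)

/-- The extremal generators `φ_a(x) = max(−a(x−1), b(x−p))` with `b = ⌊(N−a)/p⌋`,
and `φ_0 = 0`. -/
noncomputable def phiF (p N a : ℕ) (x : ℝ) : ℝ :=
  if a = 0 then 0
  else max (-(a : ℝ) * (x - 1)) ((⌊((N : ℝ) - a) / p⌋ : ℝ) * (x - p))

/-- The constraint `0 < t_1 < … < t_{N−p} < ε` on the parameters `(t_i)` (with `t_0 ∈ ℝ` free). -/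
def SimplexConstraints (Np : ℕ) (t : ℕ → ℝ) (ε : ℝ) : Prop :=
  (∀ i, 1 ≤ i → i ≤ Np → 0 < t i) ∧
  (∀ i, 1 ≤ i → i + 1 ≤ Np → t i < t (i + 1)) ∧
  (∀ i, 1 ≤ i → i ≤ Np → t i < ε)

/-- The map `h(t_0,…,t_{N−p})(x) = max_{0 ≤ j ≤ N−p} (φ_{N−p−j}(x) − Σ_{i=0}^{j} t_i)`. -/
noncomputable def hMap (p N : ℕ) (t : ℕ → ℝ) (x : ℝ) : ℝ :=
  (Finset.range (N - p + 1)).sup' (by simp)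
    (fun j => phiF p N (N - p - j) x - ∑ i ∈ Finset.range (j + 1), t i)


open Finset

noncomputable def supA (K : ℕ) (m : ℕ → ℤ) (c : ℕ → ℝ) (x : ℝ) : ℝ :=
  (Finset.range (K+1)).sup' (by simp) fun k => (m k : ℝ) * x + c k

lemma supA_succ (K : ℕ) (m : ℕ → ℤ) (c : ℕ → ℝ) (x : ℝ) :
    supA (K+1) m c x = max ((m (K+1) : ℝ) * x + c (K+1)) (supA K m c x) := by
  apply le_antisymm
  · refine Finset.sup'_le _ _ fun k hk => ?_
    rcases Finset.mem_range_succ_iff.mp hk with hk'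
    rcases eq_or_lt_of_le hk' with h | h
    · rw [h]; exact le_max_left _ _
    · exact le_trans (Finset.le_sup' (f := fun k => (m k : ℝ) * x + c k)
        (Finset.mem_range.mpr (by omega))) (le_max_right _ _)
  · refine max_le ?_ ?_
    · exact Finset.le_sup' (f := fun k => (m k : ℝ) * x + c k)
        (Finset.mem_range.mpr (by omega))
    · refine Finset.sup'_le _ _ fun k hk => ?_
      exact Finset.le_sup' (f := fun k => (m k : ℝ) * x + c k)
        (Finset.mem_range.mpr (by simp at hk ⊢; omega))

lemma supA_cont (K : ℕ) (m : ℕ → ℤ) (c : ℕ → ℝ) : Continuous (supA K m c) := by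
  induction K with
  | zero =>
      have : supA 0 m c = fun x => (m 0 : ℝ) * x + c 0 := by
        funext x; unfold supA; simp
      rw [this]; continuity
  | succ K ih =>
      have : supA (K+1) m c = fun x => max ((m (K+1) : ℝ) * x + c (K+1)) (supA K m c x) := by
        funext x; exact supA_succ K m c x
      rw [this]
      exact Continuous.max (by continuity) ih

lemma le_supA (K : ℕ) (m : ℕ → ℤ) (c : ℕ → ℝ) (x : ℝ) {k : ℕ} (hk : k ∈ Finset.range (K+1)) :
    (m k : ℝ) * x + c k ≤ supA K m c x :=
  Finset.le_sup' (fun k => (m k : ℝ) * x + c k) hk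

lemma supA_le (K : ℕ) (m : ℕ → ℤ) (c : ℕ → ℝ) (x : ℝ) {b : ℝ}
    (h : ∀ k ∈ Finset.range (K+1), (m k : ℝ) * x + c k ≤ b) : supA K m c x ≤ b :=
  Finset.sup'_le _ _ h

lemma supA_convex (K : ℕ) (m : ℕ → ℤ) (c : ℕ → ℝ) (s : Set ℝ) (hs : Convex ℝ s) :
    ConvexOn ℝ s (supA K m c) := by
  refine ⟨hs, fun x hx y hy a b ha hb hab => ?_⟩
  simp only [smul_eq_mul]
  refine supA_le _ _ _ _ fun k hk => ?_
  have h1 : (m k : ℝ) * x + c k ≤ supA K m c x := le_supA _ _ _ _ hk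
  have h2 : (m k : ℝ) * y + c k ≤ supA K m c y := le_supA _ _ _ _ hk
  have hc : a * (c k) + b * (c k) = c k := by rw [← add_mul, hab, one_mul]
  nlinarith [mul_le_mul_of_nonneg_left h1 ha, mul_le_mul_of_nonneg_left h2 hb, hc]

open scoped Classical in
lemma supA_piecewise (K : ℕ) (m : ℕ → ℤ) (c : ℕ → ℝ) (P : ℝ) (hP : 2 ≤ P) :
    ∃ (n : ℕ) (t : ℕ → ℝ), 0 < n ∧ t 0 = 1 ∧ t n = P ∧ (∀ i < n, t i < t (i + 1)) ∧
      (∀ i ≤ n, 1 ≤ t i ∧ t i ≤ P) ∧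
      ∀ i < n, ∃ (mm : ℤ) (cc : ℝ), ∀ x ∈ Set.Icc (t i) (t (i + 1)),
        supA K m c x = (mm : ℝ) * x + cc := by
  set X : Finset ℝ := insert 1 (insert P
    ((((Finset.range (K+1)) ×ˢ (Finset.range (K+1))).image
      (fun q => (c q.2 - c q.1) / ((m q.1 : ℝ) - (m q.2)))).filter
      (fun z => 1 ≤ z ∧ z ≤ P))) with hX
  have h1X : (1:ℝ) ∈ X := by simp [hX]
  have hPX : P ∈ X := by simp [hX]
  have hmemX : ∀ z ∈ X, 1 ≤ z ∧ z ≤ P := by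
    intro z hz
    simp only [hX, Finset.mem_insert, Finset.mem_filter] at hz
    rcases hz with rfl | rfl | ⟨_, h⟩
    · exact ⟨le_refl _, by linarith⟩
    · exact ⟨by linarith, le_refl _⟩
    · exact h
  set l := X.sort (· ≤ ·) with hl
  have hlen : l.length = X.card := Finset.length_sort _
  have hcard : 2 ≤ X.card := by
    have hsub : ({1, P} : Finset ℝ) ⊆ X := by
      intro z hz; simp at hz; rcases hz with rfl | rfl; exacts [h1X, hPX]
    calc 2 = ({1, P} : Finset ℝ).card := by
            rw [Finset.card_insert_of_notMem (by simp; linarith), Finset.card_singleton]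
    _ ≤ X.card := Finset.card_le_card hsub
  set n := l.length - 1 with hn
  have hn1 : 1 ≤ n := by omega
  set t : ℕ → ℝ := fun i => l.getD i P with ht
  have hget : ∀ i (h : i < l.length), t i = l.get ⟨i, h⟩ := by
    intro i h
    simp only [ht, List.getD_eq_getElem?_getD, List.get_eq_getElem,
      List.getElem?_eq_getElem h, Option.getD_some]
  have hsorted : l.Pairwise (· < ·) := (Finset.sortedLT_sort X).pairwise
  have hsle : l.Pairwise (· ≤ ·) := Finset.pairwise_sort _ _
  have htmem : ∀ i ≤ n, t i ∈ X := by
    intro i hi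
    rw [hget i (by omega)]
    rw [← Finset.mem_sort (α := ℝ) (· ≤ ·)]
    exact List.get_mem _ _
  have ht0 : t 0 = 1 := by
    apply le_antisymm
    · have h1l : (1:ℝ) ∈ l := (Finset.mem_sort (α := ℝ) (· ≤ ·)).mpr h1X
      obtain ⟨idx, hidx⟩ := List.mem_iff_get.mp h1l
      rw [hget 0 (by omega), ← hidx]
      exact hsle.rel_get_of_le (Nat.zero_le _)
    · exact (hmemX _ (htmem 0 (by omega))).1
  have htn : t n = P := by
    apply le_antisymm
    · exact (hmemX _ (htmem n (le_refl _))).2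
    · have hPl : P ∈ l := (Finset.mem_sort (α := ℝ) (· ≤ ·)).mpr hPX
      obtain ⟨idx, hidx⟩ := List.mem_iff_get.mp hPl
      rw [hget n (by omega)]
      exact hidx.symm.trans_le <| hsle.rel_get_of_le (by simp [Fin.le_def, hn]; omega)
  have hmono : ∀ i < n, t i < t (i+1) := by
    intro i hi
    rw [hget i (by omega), hget (i+1) (by omega)]
    exact hsorted.rel_get_of_lt (by simp [Fin.lt_def])
  refine ⟨n, t, by omega, ht0, htn, hmono, fun i hi => hmemX _ (htmem i hi), ?_⟩
  intro i hi
  set x0 := (t i + t (i+1)) / 2 with hx0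
  have hx0mem : t i < x0 ∧ x0 < t (i+1) := by
    have := hmono i hi
    constructor <;> (simp only [hx0]; linarith)
  obtain ⟨k0, hk0mem, hk0⟩ := Finset.exists_mem_eq_sup' (by simp : (Finset.range (K+1)).Nonempty)
    (fun k => (m k : ℝ) * x0 + c k)
  refine ⟨m k0, c k0, ?_⟩
  intro x hx
  have hx1 : 1 ≤ t i := (hmemX _ (htmem i (by omega))).1
  have hxP : t (i+1) ≤ P := (hmemX _ (htmem (i+1) (by omega))).2
  obtain ⟨hxl, hxr⟩ := hx
  apply le_antisymm
  · refine Finset.sup'_le _ _ fun j hj => ?_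
    have hjle : (m j : ℝ) * x0 + c j ≤ (m k0 : ℝ) * x0 + c k0 := by
      rw [← hk0]; exact Finset.le_sup' (f := fun k => (m k : ℝ) * x0 + c k) hj
    by_cases hmm : m j = m k0
    · rw [hmm]; rw [hmm] at hjle; linarith
    · set z := (c j - c k0) / ((m k0 : ℝ) - m j) with hz
      have hmne : (m k0 : ℝ) - m j ≠ 0 := by
        intro h
        apply hmm
        have hcast : (m j : ℝ) = m k0 := by linarith
        exact_mod_cast hcast
      have hzc : c j - c k0 = ((m k0 : ℝ) - m j) * z := by
        rw [hz, mul_div_assoc']; exact (mul_div_cancel_left₀ _ hmne).symm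
      have hd : ∀ y : ℝ, (m j : ℝ) * y + c j - ((m k0 : ℝ) * y + c k0)
          = ((m j : ℝ) - m k0) * (y - z) := by
        intro y
        have : ((m j : ℝ) - m k0) * z = -(c j - c k0) := by rw [hzc]; ring
        nlinarith [this]
      by_cases hzin : t i < z ∧ z < t (i+1)
      · exfalso
        have hzX : z ∈ X := by
          simp only [hX, Finset.mem_insert, Finset.mem_filter, Finset.mem_image]
          right; right
          refine ⟨⟨(k0, j), ?_, rfl⟩, ?_, ?_⟩
          · simp only [Finset.mem_product]; exact ⟨hk0mem, hj⟩
          · linarith [hzin.1]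
          · linarith [hzin.2]
        have hzl : z ∈ l := (Finset.mem_sort (α := ℝ) (· ≤ ·)).mpr hzX
        obtain ⟨idx, hidx⟩ := List.mem_iff_get.mp hzl
        have hii : i < l.length := by omega
        have hii1 : i + 1 < l.length := by omega
        have h1 : t i < l.get idx := by rw [hidx]; exact hzin.1
        have h2 : l.get idx < t (i+1) := by rw [hidx]; exact hzin.2
        rw [hget i hii] at h1
        rw [hget (i+1) hii1] at h2
        have hgt : i < (idx : ℕ) := by
          by_contra hc
          push_neg at hc
          exact absurd (hsle.rel_get_of_le (a := idx) (b := ⟨i, hii⟩) (by simpa [Fin.le_def])) (by linarith)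
        have hlt : (idx : ℕ) < i + 1 := by
          by_contra hc
          push_neg at hc
          exact absurd (hsle.rel_get_of_le (a := ⟨i+1, hii1⟩) (b := idx) (by simpa [Fin.le_def])) (by linarith)
        omega
      · have hd0 : ((m j : ℝ) - m k0) * (x0 - z) ≤ 0 := by rw [← hd]; linarith
        have hdx : ((m j : ℝ) - m k0) * (x - z) ≤ 0 := by
          rcases not_and_or.mp hzin with h | h
          · push_neg at h
            have h1 : 0 < x0 - z := by linarith [hx0mem.1]
            have h2 : 0 ≤ x - z := by linarith
            nlinarith
          · push_neg at h
            have h1 : x0 - z < 0 := by linarith [hx0mem.2]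
            have h2 : x - z ≤ 0 := by linarith
            nlinarith
        have := hd x
        linarith
  · exact Finset.le_sup' (f := fun k => (m k : ℝ) * x + c k) hk0mem

lemma convexOn_congr {s : Set ℝ} {f g : ℝ → ℝ} (hf : ConvexOn ℝ s f)
    (h : ∀ x ∈ s, f x = g x) : ConvexOn ℝ s g := by
  refine ⟨hf.1, fun x hx y hy a b ha hb hab => ?_⟩
  rw [← h x hx, ← h y hy, ← h _ (hf.1 hx hy ha hb hab)]
  exact hf.2 hx hy ha hb hab

lemma supA_zero (m : ℕ → ℤ) (c : ℕ → ℝ) (x : ℝ) :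
    supA 0 m c x = (m 0 : ℝ) * x + c 0 := by
  unfold supA
  simp

lemma supA_one (m : ℕ → ℤ) (c : ℕ → ℝ) (x : ℝ) :
    supA 1 m c x = max ((m 0 : ℝ) * x + c 0) ((m 1 : ℝ) * x + c 1) := by
  rw [show (1:ℕ) = 0 + 1 from rfl, supA_succ, supA_zero, max_comm]

lemma supA_ENp_part (p : ℕ) (hp2 : 2 ≤ p) (K : ℕ) (m : ℕ → ℤ) (c : ℕ → ℝ) (f : ℝ → ℝ)
    (hf : ∀ x ∈ Set.Icc 1 (p:ℝ), f x = supA K m c x) :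
    ContinuousOn f (Set.Icc 1 (p:ℝ)) ∧ ConvexOn ℝ (Set.Icc 1 (p : ℝ)) f ∧
    (∃ (n : ℕ) (t : ℕ → ℝ), 0 < n ∧ t 0 = 1 ∧ t n = p ∧ (∀ i < n, t i < t (i + 1)) ∧
      ∀ i < n, ∃ (mm : ℤ) (cc : ℝ), ∀ x ∈ Set.Icc (t i) (t (i + 1)),
        f x = (mm : ℝ) * x + cc) := by
  have hP : (2:ℝ) ≤ p := by exact_mod_cast hp2
  refine ⟨((supA_cont K m c).continuousOn).congr hf, convexOn_congr (supA_convex K m c _ (convex_Icc _ _)) (fun x hx => (hf x hx).symm), ?_⟩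
  obtain ⟨n, t, hn, ht0, htn, hmono, hbound, hpiece⟩ := supA_piecewise K m c (p:ℝ) hP
  refine ⟨n, t, hn, ht0, htn, hmono, fun i hi => ?_⟩
  obtain ⟨mm, cc, hmc⟩ := hpiece i hi
  refine ⟨mm, cc, fun x hx => ?_⟩
  have hx1 : (1:ℝ) ≤ x := le_trans (hbound i (by omega)).1 hx.1
  have hxp : x ≤ (p:ℝ) := le_trans hx.2 (hbound (i+1) (by omega)).2
  rw [hf x ⟨hx1, hxp⟩]
  exact hmc x hx

noncomputable def bI (p N a : ℕ) : ℤ := ⌊((N:ℝ) - a) / p⌋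

lemma bI_ge_one {p N a : ℕ} (hp : 0 < p) (h : a + p ≤ N) : 1 ≤ bI p N a := by
  rw [bI, Int.le_floor]
  rw [le_div_iff₀ (by exact_mod_cast hp : (0:ℝ) < p)]
  push_cast
  have : (a:ℝ) + p ≤ N := by exact_mod_cast h
  linarith

lemma bI_mul_le {p N a : ℕ} (hp : 0 < p) : (p:ℝ) * (bI p N a) ≤ (N:ℝ) - a := by
  have h := Int.floor_le (((N:ℝ) - a) / p)
  have hp' : (0:ℝ) < p := by exact_mod_cast hp
  rw [bI]
  calc (p:ℝ) * ⌊((N:ℝ) - a) / p⌋ ≤ (p:ℝ) * (((N:ℝ) - a)/p) :=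
        mul_le_mul_of_nonneg_left h (le_of_lt hp')
  _ = (N:ℝ) - a := by field_simp

lemma phi_eq {p N : ℕ} (hp : 0 < p) (hpN : p ≤ N) (a : ℕ) (x : ℝ)
    (hx : x ∈ Set.Icc 1 (p:ℝ)) :
    phiF p N a x = max ((-(a:ℤ) : ℝ) * x + a) ((bI p N a : ℝ) * x + (-(bI p N a : ℝ)) * p) := by
  by_cases ha : a = 0
  · subst ha
    have hb : (1:ℝ) ≤ (bI p N 0 : ℝ) := by exact_mod_cast bI_ge_one hp (by omega)
    have hxp : x ≤ (p:ℝ) := hx.2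
    rw [phiF, if_pos rfl, max_eq_left]
    · push_cast; ring
    · have : (bI p N 0 : ℝ) * x + (-(bI p N 0 : ℝ)) * p = (bI p N 0 : ℝ) * (x - p) := by ring
      rw [this]
      push_cast
      nlinarith
  · rw [phiF, if_neg ha, bI]
    congr 1 <;> push_cast <;> ring

lemma phi_values {p N a : ℕ} (hp : 0 < p) (hpN : a + p ≤ N) (ha : 1 ≤ a) :
    phiF p N a 1 = 0 ∧ phiF p N a (p:ℝ) = 0 := by
  have hb : (1:ℝ) ≤ ((bI p N a : ℤ) : ℝ) := by exact_mod_cast bI_ge_one hp hpN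
  rw [show ((bI p N a : ℤ) : ℝ) = (⌊((N : ℝ) - a) / p⌋ : ℝ) from rfl] at hb
  have hp1 : (1:ℝ) ≤ (p:ℝ) := by exact_mod_cast hp
  have ha' : (0:ℝ) < a := by exact_mod_cast ha
  rw [phiF, if_neg (by omega), phiF, if_neg (by omega)]
  constructor
  · rw [max_eq_left] <;> nlinarith
  · rw [max_eq_right] <;> nlinarith

lemma phi_mem {p N a : ℕ} (hp2 : 2 ≤ p) (hN : p < N) (ha : 1 ≤ a) (haN : a ≤ N - p) :
    ENp p N (phiF p N a) := by
  have hp : 0 < p := by omega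
  have hpN : a + p ≤ N := by omega
  have hp1 : (1:ℝ) < (p:ℝ) := by exact_mod_cast by omega
  have hb1 : (1:ℝ) ≤ ((bI p N a : ℤ) : ℝ) := by exact_mod_cast bI_ge_one hp hpN
  have ha' : (1:ℝ) ≤ (a:ℝ) := by exact_mod_cast ha
  set b : ℝ := ((bI p N a : ℤ) : ℝ) with hbdef
  set m2 : ℕ → ℤ := fun k => if k = 0 then -(a:ℤ) else bI p N a with hm2
  set c2 : ℕ → ℝ := fun k => if k = 0 then (a:ℝ) else -b * p with hc2
  have heq : ∀ x ∈ Set.Icc 1 (p:ℝ), phiF p N a x = supA 1 m2 c2 x := by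
    intro x hx
    rw [phi_eq hp (by omega) a x hx, supA_one]
    simp [hm2, hc2, hbdef]
  obtain ⟨hcont, hconv, hpiece⟩ := supA_ENp_part p hp2 1 m2 c2 _ heq
  obtain ⟨h1, hpv⟩ := phi_values hp hpN ha
  refine ⟨hcont, hconv, hpiece, by rw [h1, hpv], -(a:ℝ), b, ?_, ?_, ?_⟩
  · -- right slope at 1
    have hab : (0:ℝ) < (a:ℝ) + b := by linarith
    refine ⟨b * ((p:ℝ) - 1) / ((a:ℝ) + b), div_pos (by nlinarith) hab, fun y hy => ?_⟩
    obtain ⟨hy1, hy2⟩ := hy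
    rw [h1, phiF, if_neg (by omega)]
    rw [max_eq_left]
    · ring
    · have : ((a:ℝ) + b) * (y - 1) < b * ((p:ℝ) - 1) := by
        have hab : (0:ℝ) < (a:ℝ) + b := by linarith
        calc ((a:ℝ) + b) * (y - 1) < ((a:ℝ) + b) * (b * ((p:ℝ) - 1) / ((a:ℝ) + b)) := by
              apply mul_lt_mul_of_pos_left _ hab
              linarith
        _ = b * ((p:ℝ) - 1) := by field_simp
      have hbb : ((⌊((N : ℝ) - a) / p⌋ : ℤ) : ℝ) = b := rfl
      nlinarith
  · -- left slope at p
    have hab : (0:ℝ) < (a:ℝ) + b := by linarith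
    refine ⟨(a:ℝ) * ((p:ℝ) - 1) / ((a:ℝ) + b), div_pos (by nlinarith) hab, fun y hy => ?_⟩
    obtain ⟨hy1, hy2⟩ := hy
    rw [hpv, phiF, if_neg (by omega)]
    rw [max_eq_right]
    · have hbb : ((⌊((N : ℝ) - a) / p⌋ : ℤ) : ℝ) = b := rfl
      rw [hbb]; ring
    · have : b * ((p:ℝ) - 1) ≤ ((a:ℝ) + b) * (y - 1) := by
        have hab : (0:ℝ) < (a:ℝ) + b := by linarith
        have h' : (p:ℝ) - (a:ℝ) * ((p:ℝ) - 1) / ((a:ℝ) + b) < y := hy1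
        have h'' : (a:ℝ) * ((p:ℝ) - 1) / ((a:ℝ) + b) = (a:ℝ) * ((p:ℝ) - 1) / ((a:ℝ) + b) := rfl
        have : ((a:ℝ) + b) * ((p:ℝ) - (a:ℝ) * ((p:ℝ) - 1) / ((a:ℝ) + b)) < ((a:ℝ)+b) * y :=
          mul_lt_mul_of_pos_left h' hab
        have hexp : ((a:ℝ) + b) * ((p:ℝ) - (a:ℝ) * ((p:ℝ) - 1) / ((a:ℝ) + b))
            = ((a:ℝ)+b) * p - (a:ℝ) * ((p:ℝ) - 1) := by field_simp
        nlinarith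
      have hbb : ((⌊((N : ℝ) - a) / p⌋ : ℤ) : ℝ) = b := rfl
      nlinarith
  · -- -s1 + p * sp ≤ N
    have := bI_mul_le (a := a) (N := N) hp
    have hbb : (p:ℝ) * b ≤ (N:ℝ) - a := this
    linarith
lemma tmono {n : ℕ} {t : ℕ → ℝ} {ε : ℝ} (hT : SimplexConstraints n t ε) :
    ∀ i i', 1 ≤ i → i ≤ i' → i' ≤ n → t i ≤ t i' := by
  intro i i' h1 h2 h3
  induction i' with
  | zero => omega
  | succ k ih =>
      rcases Nat.eq_or_lt_of_le h2 with h | h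
      · rw [h]
      · exact le_trans (ih (by omega) (by omega))
          (le_of_lt (hT.2.1 k (by omega) (by omega)))

lemma S_le_bound (t : ℕ → ℝ) (u : ℝ) (j j' : ℕ) (h : j ≤ j')
    (hb : ∀ i, j + 1 ≤ i → i ≤ j' → t i ≤ u) :
    (∑ i ∈ Finset.range (j'+1), t i) - (∑ i ∈ Finset.range (j+1), t i)
      ≤ ((j' - j : ℕ) : ℝ) * u := by
  rw [← Finset.sum_Ico_eq_sub _ (by omega)]
  have := Finset.sum_le_card_nsmul (Finset.Ico (j+1) (j'+1)) t u
    (fun i hi => by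
      simp only [Finset.mem_Ico] at hi
      exact hb i hi.1 (by omega))
  rw [Nat.card_Ico] at this
  rw [show (j'+1) - (j+1) = j' - j from by omega] at this
  simpa [nsmul_eq_mul] using this

lemma S_ge_bound (t : ℕ → ℝ) (u : ℝ) (j j' : ℕ) (h : j ≤ j')
    (hb : ∀ i, j + 1 ≤ i → i ≤ j' → u ≤ t i) :
    ((j' - j : ℕ) : ℝ) * u
      ≤ (∑ i ∈ Finset.range (j'+1), t i) - (∑ i ∈ Finset.range (j+1), t i) := by
  rw [← Finset.sum_Ico_eq_sub _ (by omega)]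
  have := Finset.card_nsmul_le_sum (Finset.Ico (j+1) (j'+1)) t u
    (fun i hi => by
      simp only [Finset.mem_Ico] at hi
      exact hb i hi.1 (by omega))
  rw [Nat.card_Ico] at this
  rw [show (j'+1) - (j+1) = j' - j from by omega] at this
  simpa [nsmul_eq_mul] using this

lemma phi_one0 {p N a : ℕ} (hp2 : 2 ≤ p) (hN : p < N) (ha : a ≤ N - p) :
    phiF p N a 1 = 0 ∧ phiF p N a (p:ℝ) = 0 := by
  by_cases h : a = 0
  · subst h; rw [phiF, if_pos rfl]; exact ⟨rfl, rfl⟩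
  · exact phi_values (by omega) (by omega) (by omega)
noncomputable def mH (p N : ℕ) : ℕ → ℤ :=
  fun k => if k % 2 = 0 then -((N - p - k/2 : ℕ) : ℤ) else bI p N (N - p - k/2)

noncomputable def cH (p N : ℕ) (t : ℕ → ℝ) : ℕ → ℝ :=
  fun k => (if k % 2 = 0 then ((N - p - k/2 : ℕ) : ℝ)
    else (-(bI p N (N - p - k/2) : ℝ)) * p) - ∑ i ∈ Finset.range (k/2 + 1), t i

lemma hMap_eq_supA {p N : ℕ} (hp2 : 2 ≤ p) (hN : p < N) (t : ℕ → ℝ) :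
    ∀ x ∈ Set.Icc 1 (p:ℝ), hMap p N t x = supA (2*(N-p)+1) (mH p N) (cH p N t) x := by
  intro x hx
  have hp : 0 < p := by omega
  apply le_antisymm
  · refine Finset.sup'_le _ _ fun j hj => ?_
    simp only [Finset.mem_range] at hj
    rw [phi_eq hp (by omega) (N - p - j) x hx]
    have hL := le_supA (2*(N-p)+1) (mH p N) (cH p N t) x
      (k := 2*j) (Finset.mem_range.mpr (by omega))
    have hR := le_supA (2*(N-p)+1) (mH p N) (cH p N t) x
      (k := 2*j+1) (Finset.mem_range.mpr (by omega))
    have e1 : (2*j)/2 = j := by omega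
    have e2 : (2*j) % 2 = 0 := by omega
    have e3 : (2*j+1)/2 = j := by omega
    have e4 : (2*j+1) % 2 = 1 := by omega
    rw [mH, cH] at hL hR
    simp only [e1, e2, e3, e4, if_pos, if_neg, one_ne_zero, reduceIte] at hL hR
    rw [← max_sub_sub_right]
    apply max_le
    · exact le_trans (le_of_eq (by push_cast; ring)) hL
    · exact le_trans (le_of_eq (by push_cast; ring)) hR
  · refine supA_le _ _ _ _ fun k hk => ?_
    simp only [Finset.mem_range] at hk
    have hj2 : k/2 < N - p + 1 := by omega
    have hterm : phiF p N (N - p - k/2) x - ∑ i ∈ Finset.range (k/2 + 1), t i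
        ≤ hMap p N t x :=
      Finset.le_sup'
        (f := fun j => phiF p N (N - p - j) x - ∑ i ∈ Finset.range (j + 1), t i)
        (Finset.mem_range.mpr hj2)
    refine le_trans ?_ hterm
    rw [phi_eq hp (by omega) (N - p - k/2) x hx]
    rcases Nat.even_or_odd k with he | ho
    · have e2 : k % 2 = 0 := Nat.even_iff.mp he
      rw [mH, cH]
      simp only [e2, if_pos, reduceIte]
      have := le_max_left ((-((N - p - k/2 : ℕ):ℤ) : ℝ) * x + ((N - p - k/2 : ℕ):ℝ))
        ((bI p N (N - p - k/2) : ℝ) * x + (-(bI p N (N - p - k/2) : ℝ)) * p)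
      push_cast at this ⊢
      linarith
    · have e2 : k % 2 = 1 := Nat.odd_iff.mp ho
      rw [mH, cH]
      simp only [e2, one_ne_zero, reduceIte]
      have := le_max_right ((-((N - p - k/2 : ℕ):ℤ) : ℝ) * x + ((N - p - k/2 : ℕ):ℝ))
        ((bI p N (N - p - k/2) : ℝ) * x + (-(bI p N (N - p - k/2) : ℝ)) * p)
      push_cast at this ⊢
      linarith
lemma S_zero (t : ℕ → ℝ) : ∑ i ∈ Finset.range (0+1), t i = t 0 := by
  simp

lemma S0_le {n : ℕ} {t : ℕ → ℝ} {ε : ℝ} (hT : SimplexConstraints n t ε) {j : ℕ} (hj : j ≤ n) :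
    ((j:ℕ) : ℝ) * t 1 ≤ (∑ i ∈ Finset.range (j+1), t i) - t 0 := by
  have := S_ge_bound t (t 1) 0 j (by omega)
    (fun i hi1 hi2 => by
      rcases Nat.eq_or_lt_of_le hi1 with h | h
      · rw [← h]
      · exact tmono hT 1 i (by omega) (by omega) (by omega))
  rw [S_zero] at this
  simpa using this

lemma hMap_endpoint {p N : ℕ} (hp2 : 2 ≤ p) (hN : p < N) {t : ℕ → ℝ} {ε : ℝ}
    (hT : SimplexConstraints (N - p) t ε) (x : ℝ)
    (hphi : ∀ a ≤ N - p, phiF p N a x = 0) :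
    hMap p N t x = -(t 0) := by
  have ht1 : 0 < t 1 := hT.1 1 (le_refl _) (by omega)
  apply le_antisymm
  · refine Finset.sup'_le _ _ fun j hj => ?_
    simp only [Finset.mem_range] at hj
    rw [hphi (N - p - j) (by omega)]
    have := S0_le hT (j := j) (by omega)
    have hj0 : (0:ℝ) ≤ (j:ℝ) * t 1 := by positivity
    linarith
  · have hterm := Finset.le_sup'
      (f := fun j => phiF p N (N - p - j) x - ∑ i ∈ Finset.range (j + 1), t i)
      (Finset.mem_range.mpr (by omega : 0 < N - p + 1))
    refine le_trans (le_of_eq ?_) hterm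
    rw [hphi (N - p - 0) (by omega), S_zero]
    ring

lemma hMap_one {p N : ℕ} (hp2 : 2 ≤ p) (hN : p < N) {t : ℕ → ℝ} {ε : ℝ}
    (hT : SimplexConstraints (N - p) t ε) :
    hMap p N t 1 = -(t 0) ∧ hMap p N t (p:ℝ) = -(t 0) :=
  ⟨hMap_endpoint hp2 hN hT 1 (fun a ha => (phi_one0 hp2 hN ha).1),
   hMap_endpoint hp2 hN hT (p:ℝ) (fun a ha => (phi_one0 hp2 hN ha).2)⟩

lemma hMap_rslope {p N : ℕ} (hp2 : 2 ≤ p) (hN : p < N) {t : ℕ → ℝ} {ε : ℝ}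
    (hT : SimplexConstraints (N - p) t ε) (hε0 : 0 < ε) :
    HasRightSlope (hMap p N t) 1 (-((N - p : ℕ) : ℝ)) := by
  have hp : 0 < p := by omega
  have hnp1 : 1 ≤ N - p := by omega
  have hpr : (2:ℝ) ≤ p := by exact_mod_cast hp2
  have hnpr : (1:ℝ) ≤ ((N - p : ℕ) : ℝ) := by exact_mod_cast hnp1
  have ht1 : 0 < t 1 := hT.1 1 (le_refl _) (by omega)
  have hdpos : (0:ℝ) < ((p:ℝ) - 1) / (((N - p : ℕ) : ℝ) + 1) :=
    div_pos (by linarith) (by linarith)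
  refine ⟨min (((p:ℝ) - 1) / (((N - p : ℕ) : ℝ) + 1)) (t 1), lt_min hdpos ht1, fun y hy => ?_⟩
  obtain ⟨hy1, hy2⟩ := hy
  have hyd : y - 1 < ((p:ℝ) - 1) / (((N - p : ℕ) : ℝ) + 1) :=
    lt_of_lt_of_le (by linarith [hy2]) (min_le_left _ _)
  have hyt : y - 1 ≤ t 1 := le_of_lt (lt_of_lt_of_le (by linarith [hy2]) (min_le_right _ _))
  have hymul : (y - 1) * (((N - p : ℕ) : ℝ) + 1) ≤ (p:ℝ) - 1 :=
    le_of_lt ((lt_div_iff₀ (by linarith)).mp hyd)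
  have hyIcc : y ∈ Set.Icc 1 (p:ℝ) := by
    constructor
    · exact hy1
    · nlinarith
  rw [(hMap_one hp2 hN hT).1]
  apply le_antisymm
  · refine Finset.sup'_le _ _ fun j hj => ?_
    simp only [Finset.mem_range] at hj
    rw [phi_eq hp (by omega) (N - p - j) y hyIcc, ← max_sub_sub_right]
    have hS := S0_le hT (j := j) (by omega)
    have hj0 : (0:ℝ) ≤ (j:ℝ) := by positivity
    have hcast : ((N - p - j : ℕ) : ℝ) = ((N - p : ℕ) : ℝ) - (j:ℝ) := by
      rw [show N - p - j = (N - p) - j from rfl]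
      push_cast [Nat.cast_sub (by omega : j ≤ N - p)]
      ring
    apply max_le
    · have : ((-((N - p - j : ℕ) : ℤ)) : ℝ) = -(((N - p : ℕ) : ℝ) - (j:ℝ)) := by
        push_cast [hcast]
        simp [hcast]
      rw [this, hcast]
      nlinarith [mul_le_mul_of_nonneg_left hyt hj0]
    · have hb1 : (1:ℝ) ≤ (bI p N (N - p - j) : ℝ) := by
        exact_mod_cast bI_ge_one hp (by omega)
      have hyp : y ≤ (p:ℝ) := hyIcc.2
      have hS0 : (0:ℝ) ≤ (∑ i ∈ Finset.range (j+1), t i) - t 0 := by nlinarith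
      nlinarith [mul_nonneg (sub_nonneg.mpr hb1) (sub_nonneg.mpr hyp)]
  · have hterm := Finset.le_sup'
      (f := fun j => phiF p N (N - p - j) y - ∑ i ∈ Finset.range (j + 1), t i)
      (Finset.mem_range.mpr (by omega : 0 < N - p + 1))
    refine le_trans ?_ hterm
    rw [phi_eq hp (by omega) (N - p - 0) y hyIcc, S_zero]
    have := le_max_left ((-((N - p - 0 : ℕ) : ℤ) : ℝ) * y + ((N - p - 0 : ℕ) : ℝ))
      ((bI p N (N - p - 0) : ℝ) * y + (-(bI p N (N - p - 0) : ℝ)) * (p:ℝ))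
    rw [show N - p - 0 = N - p from rfl] at this ⊢
    push_cast at this ⊢
    linarith

lemma bI_np {p N : ℕ} (hp2 : 2 ≤ p) (hN : p < N) : bI p N (N - p) = 1 := by
  have hp0 : (p:ℝ) ≠ 0 := by positivity
  rw [bI, show ((N:ℝ) - ((N - p : ℕ) : ℝ)) = (p:ℝ) from by
    push_cast [Nat.cast_sub (le_of_lt hN)]; ring]
  rw [div_self hp0]
  exact Int.floor_one

lemma hMap_lslope {p N : ℕ} (hp2 : 2 ≤ p) (hN : p < N) {t : ℕ → ℝ} {ε : ℝ}
    (hT : SimplexConstraints (N - p) t ε) (hε0 : 0 < ε) :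
    HasLeftSlope (hMap p N t) (p:ℝ) 1 := by
  have hp : 0 < p := by omega
  have hnp1 : 1 ≤ N - p := by omega
  have hpr : (2:ℝ) ≤ p := by exact_mod_cast hp2
  have hnpr : (1:ℝ) ≤ ((N - p : ℕ) : ℝ) := by exact_mod_cast hnp1
  have ht1 : 0 < t 1 := hT.1 1 (le_refl _) (by omega)
  refine ⟨min (((p:ℝ) - 1) / 2) (t 1), lt_min (by linarith) ht1, fun y hy => ?_⟩
  obtain ⟨hy1, hy2⟩ := hy
  have hyd : (p:ℝ) - ((p:ℝ) - 1)/2 < y := by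
    have := min_le_left (((p:ℝ) - 1) / 2) (t 1); linarith
  have hyt : (p:ℝ) - t 1 < y := by
    have := min_le_right (((p:ℝ) - 1) / 2) (t 1); linarith
  have hyIcc : y ∈ Set.Icc 1 (p:ℝ) := ⟨by linarith, hy2⟩
  have h2y : (p:ℝ) + 1 < 2 * y := by linarith
  rw [(hMap_one hp2 hN hT).2]
  apply le_antisymm
  · refine Finset.sup'_le _ _ fun j hj => ?_
    simp only [Finset.mem_range] at hj
    rw [phi_eq hp (by omega) (N - p - j) y hyIcc, ← max_sub_sub_right]
    have hS := S0_le hT (j := j) (by omega)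
    have hj0 : (0:ℝ) ≤ (j:ℝ) := by positivity
    have hS0 : (0:ℝ) ≤ (∑ i ∈ Finset.range (j+1), t i) - t 0 := by nlinarith
    apply max_le
    · by_cases hcase : N - p - j = 0
      · have hjnp : j = N - p := by omega
        rw [hcase]
        have hSn := S0_le hT (j := N - p) (le_refl _)
        rw [hjnp]
        push_cast
        nlinarith
      · have ha1 : (1:ℝ) ≤ ((N - p - j : ℕ) : ℝ) := by exact_mod_cast (by omega : 1 ≤ N - p - j)
        have : ((-((N - p - j : ℕ) : ℤ)) : ℝ) = -((N - p - j : ℕ) : ℝ) := by push_cast; ring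
        rw [this]
        nlinarith [mul_nonneg (sub_nonneg.mpr ha1) (sub_nonneg.mpr hyIcc.1)]
    · have hb1 : (1:ℝ) ≤ (bI p N (N - p - j) : ℝ) := by
        exact_mod_cast bI_ge_one hp (by omega)
      nlinarith [mul_nonneg (sub_nonneg.mpr hb1) (sub_nonneg.mpr hy2)]
  · have hterm := Finset.le_sup'
      (f := fun j => phiF p N (N - p - j) y - ∑ i ∈ Finset.range (j + 1), t i)
      (Finset.mem_range.mpr (by omega : 0 < N - p + 1))
    refine le_trans ?_ hterm
    rw [phi_eq hp (by omega) (N - p - 0) y hyIcc, S_zero]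
    have := le_max_right ((-((N - p - 0 : ℕ) : ℤ) : ℝ) * y + ((N - p - 0 : ℕ) : ℝ))
      ((bI p N (N - p - 0) : ℝ) * y + (-(bI p N (N - p - 0) : ℝ)) * (p:ℝ))
    rw [show N - p - 0 = N - p from rfl] at this ⊢
    rw [bI_np hp2 hN] at this ⊢
    push_cast at this ⊢
    linarith

lemma hMap_mem {p N : ℕ} (hp2 : 2 ≤ p) (hN : p < N) {t : ℕ → ℝ} {ε : ℝ}
    (hT : SimplexConstraints (N - p) t ε) (hε0 : 0 < ε) :
    ENp p N (hMap p N t) := by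
  obtain ⟨hcont, hconv, hpiece⟩ := supA_ENp_part p hp2 (2*(N-p)+1) (mH p N) (cH p N t)
    (hMap p N t) (hMap_eq_supA hp2 hN t)
  obtain ⟨h1, hpv⟩ := hMap_one hp2 hN (ε := ε) hT
  refine ⟨hcont, hconv, hpiece, by rw [h1, hpv], -((N - p : ℕ) : ℝ), 1,
    hMap_rslope hp2 hN hT hε0, hMap_lslope hp2 hN hT hε0, ?_⟩
  push_cast [Nat.cast_sub (le_of_lt hN)]
  linarith

lemma hMap_eval {p N : ℕ} (hp2 : 2 ≤ p) (hN : p < N) {t : ℕ → ℝ} {ε : ℝ}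
    (hT : SimplexConstraints (N - p) t ε)
    (hε : ε ≤ ((p:ℝ) - 1) / (((N - p : ℕ) : ℝ) + 1))
    (j : ℕ) (hj : j ≤ N - p) (u : ℝ) (hu0 : 0 < u) (huε : u < ε)
    (hlo : ∀ i, 1 ≤ i → i ≤ j → t i ≤ u) (hhi : ∀ i, j < i → i ≤ N - p → u ≤ t i) :
    hMap p N t (1 + u) = -((N - p - j : ℕ) : ℝ) * u - ∑ i ∈ Finset.range (j+1), t i := by
  have hp : 0 < p := by omega
  have hnp1 : 1 ≤ N - p := by omega
  have hpr : (2:ℝ) ≤ p := by exact_mod_cast hp2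
  have hnpr : (1:ℝ) ≤ ((N - p : ℕ) : ℝ) := by exact_mod_cast hnp1
  have hmul : u * (((N - p : ℕ) : ℝ) + 1) < (p:ℝ) - 1 := by
    have h1 : u < ((p:ℝ) - 1) / (((N - p : ℕ) : ℝ) + 1) := lt_of_lt_of_le huε hε
    exact (lt_div_iff₀ (by linarith)).mp h1
  have hup : u < (p:ℝ) - 1 := by nlinarith
  have hxIcc : (1 + u) ∈ Set.Icc 1 (p:ℝ) := ⟨by linarith, by linarith⟩
  apply le_antisymm
  · refine Finset.sup'_le _ _ fun j' hj' => ?_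
    simp only [Finset.mem_range] at hj'
    have hj'n : j' ≤ N - p := by omega
    rw [phi_eq hp (by omega) (N - p - j') (1+u) hxIcc, ← max_sub_sub_right]
    have hcast : ((N - p - j' : ℕ) : ℝ) = ((N - p : ℕ) : ℝ) - (j':ℝ) := by
      rw [show N - p - j' = (N - p) - j' from rfl, Nat.cast_sub hj'n]
    have hcastj : ((N - p - j : ℕ) : ℝ) = ((N - p : ℕ) : ℝ) - (j:ℝ) := by
      rw [show N - p - j = (N - p) - j from rfl, Nat.cast_sub hj]
    -- S bounds between j and j'
    have hSd : ∀ {a b : ℕ}, a ≤ b → b ≤ N - p →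
        (∀ i, a + 1 ≤ i → i ≤ b → t i ≤ u) →
        (∑ i ∈ Finset.range (b+1), t i) - (∑ i ∈ Finset.range (a+1), t i)
          ≤ ((b - a : ℕ) : ℝ) * u := fun hab hbn hb => S_le_bound t u _ _ hab hb
    apply max_le
    · -- left branch
      have key : -((N - p - j' : ℕ) : ℝ) * u - (∑ i ∈ Finset.range (j'+1), t i)
          ≤ -((N - p - j : ℕ) : ℝ) * u - ∑ i ∈ Finset.range (j+1), t i := by
        rcases le_total j' j with h | h
        · have hb := S_le_bound t u j' j h (fun i hi1 hi2 => hlo i (by omega) hi2)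
          have hc : ((j - j' : ℕ) : ℝ) = (j:ℝ) - j' := Nat.cast_sub h
          rw [hc] at hb
          rw [hcast, hcastj]
          nlinarith
        · have hb := S_ge_bound t u j j' h (fun i hi1 hi2 => hhi i (by omega) (by omega))
          have hc : ((j' - j : ℕ) : ℝ) = (j':ℝ) - j := Nat.cast_sub h
          rw [hc] at hb
          rw [hcast, hcastj]
          nlinarith
      refine le_trans (le_of_eq ?_) key
      push_cast
      ring
    · -- right branch
      have hb1 : (1:ℝ) ≤ (bI p N (N - p - j') : ℝ) := by
        exact_mod_cast bI_ge_one hp (by omega)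
      have hSjj : -((j:ℝ) * u) ≤ (∑ i ∈ Finset.range (j'+1), t i)
          - (∑ i ∈ Finset.range (j+1), t i) := by
        rcases le_total j' j with h | h
        · have hb := S_le_bound t u j' j h (fun i hi1 hi2 => hlo i (by omega) hi2)
          have hc : ((j - j' : ℕ) : ℝ) = (j:ℝ) - j' := Nat.cast_sub h
          rw [hc] at hb
          have hj'0 : (0:ℝ) ≤ (j':ℝ) := by positivity
          nlinarith
        · have hb := S_ge_bound t u j j' h (fun i hi1 hi2 => hhi i (by omega) (by omega))
          have hc : ((j' - j : ℕ) : ℝ) = (j':ℝ) - j := Nat.cast_sub h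
          rw [hc] at hb
          have : (0:ℝ) ≤ ((j':ℝ) - j) * u := by
            apply mul_nonneg _ (le_of_lt hu0)
            have : (j:ℝ) ≤ j' := by exact_mod_cast h
            linarith
          have hj0 : (0:ℝ) ≤ (j:ℝ) * u := by positivity
          nlinarith
      have hupneg : 1 + u - (p:ℝ) ≤ 0 := by linarith
      have hbb : (bI p N (N - p - j') : ℝ) * (1 + u) + (-(bI p N (N - p - j') : ℝ)) * (p:ℝ)
          ≤ 1 + u - p := by
        nlinarith [mul_nonpos_of_nonneg_of_nonpos (sub_nonneg.mpr hb1) hupneg]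
      have hjle : (j:ℝ) ≤ ((N - p : ℕ) : ℝ) := by exact_mod_cast hj
      rw [hcastj]
      linarith [hbb, hSjj, hmul, hu0]
  · have hterm := Finset.le_sup'
      (f := fun j => phiF p N (N - p - j) (1+u) - ∑ i ∈ Finset.range (j + 1), t i)
      (Finset.mem_range.mpr (by omega : j < N - p + 1))
    refine le_trans ?_ hterm
    rw [phi_eq hp (by omega) (N - p - j) (1+u) hxIcc]
    have := le_max_left ((-((N - p - j : ℕ) : ℤ) : ℝ) * (1+u) + ((N - p - j : ℕ) : ℝ))
      ((bI p N (N - p - j) : ℝ) * (1+u) + (-(bI p N (N - p - j) : ℝ)) * (p:ℝ))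
    push_cast at this ⊢
    linarith

lemma inj_aux {p N : ℕ} (hp2 : 2 ≤ p) (hN : p < N) {t t' : ℕ → ℝ} {ε : ℝ}
    (hT : SimplexConstraints (N - p) t ε) (hT' : SimplexConstraints (N - p) t' ε)
    (hε : ε ≤ ((p:ℝ) - 1) / (((N - p : ℕ) : ℝ) + 1))
    (hfun : ∀ x ∈ Set.Icc (1 : ℝ) (p:ℝ), hMap p N t x = hMap p N t' x)
    (j : ℕ) (hj : j + 1 ≤ N - p) (hIH : ∀ i ≤ j, t i = t' i) :
    ¬ (t (j+1) < t' (j+1)) := by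
  intro hlt
  have hp : 0 < p := by omega
  have hpr : (2:ℝ) ≤ p := by exact_mod_cast hp2
  have hnpr : (1:ℝ) ≤ ((N - p : ℕ) : ℝ) := by exact_mod_cast (by omega : 1 ≤ N - p)
  set u := (t (j+1) + t' (j+1)) / 2 with hu
  have hu1 : t (j+1) < u := by rw [hu]; linarith
  have hu2 : u < t' (j+1) := by rw [hu]; linarith
  have hu0 : 0 < u := lt_trans (hT.1 (j+1) (by omega) hj) hu1
  have huε : u < ε := lt_trans hu2 (hT'.2.2 (j+1) (by omega) hj)
  have heval : hMap p N t' (1+u) = -((N - p - j : ℕ) : ℝ) * u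
      - ∑ i ∈ Finset.range (j+1), t' i := by
    refine hMap_eval hp2 hN hT' hε j (by omega) u hu0 huε ?_ ?_
    · intro i hi1 hi2
      have h1 : t' i ≤ t' j := by
        rcases Nat.eq_or_lt_of_le hi2 with h | h
        · rw [h]
        · exact tmono hT' i j hi1 hi2 (by omega)
      have h2 : t' j < u := by
        rcases Nat.eq_zero_or_pos j with h | h
        · have := hIH j (le_refl _)
          rw [← this]
          rcases Nat.eq_zero_or_pos j with rfl | hj0
          · -- j = 0 : but i ≥ 1 and i ≤ 0 impossible
            omega
          · exact lt_trans (hT.2.1 j hj0 hj) hu1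
        · rw [← hIH j (le_refl _)]
          exact lt_trans (hT.2.1 j h hj) hu1
      linarith
    · intro i hi1 hi2
      exact le_trans (le_of_lt hu2) (tmono hT' (j+1) i (by omega) hi1 hi2)
  have hmul : u * (((N - p : ℕ) : ℝ) + 1) < (p:ℝ) - 1 :=
    (lt_div_iff₀ (by linarith)).mp (lt_of_lt_of_le huε hε)
  have hup : u < (p:ℝ) - 1 := by nlinarith
  have hxIcc : (1 + u) ∈ Set.Icc 1 (p:ℝ) := ⟨by linarith, by linarith⟩
  have hSeq : ∑ i ∈ Finset.range (j+1), t' i = ∑ i ∈ Finset.range (j+1), t i :=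
    Finset.sum_congr rfl (fun i hi => (hIH i (by simp at hi; omega)).symm)
  have hterm : -((N - p - (j+1) : ℕ) : ℝ) * u - ∑ i ∈ Finset.range (j+2), t i
      ≤ hMap p N t (1+u) := by
    have h := Finset.le_sup'
      (f := fun j => phiF p N (N - p - j) (1+u) - ∑ i ∈ Finset.range (j + 1), t i)
      (Finset.mem_range.mpr (by omega : j + 1 < N - p + 1))
    refine le_trans ?_ h
    rw [phi_eq hp (by omega) (N - p - (j+1)) (1+u) hxIcc]
    have := le_max_left ((-((N - p - (j+1) : ℕ) : ℤ) : ℝ) * (1+u) + ((N - p - (j+1) : ℕ) : ℝ))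
      ((bI p N (N - p - (j+1)) : ℝ) * (1+u) + (-(bI p N (N - p - (j+1)) : ℝ)) * (p:ℝ))
    push_cast at this ⊢
    linarith
  rw [hfun (1+u) hxIcc, heval, hSeq] at hterm
  rw [Finset.sum_range_succ (f := t) (n := j+1)] at hterm
  have hc1 : ((N - p - (j+1) : ℕ) : ℝ) = ((N - p : ℕ) : ℝ) - (j:ℝ) - 1 := by
    rw [show N - p - (j+1) = (N - p) - (j+1) from rfl, Nat.cast_sub hj]
    push_cast
    ring
  have hc2 : ((N - p - j : ℕ) : ℝ) = ((N - p : ℕ) : ℝ) - (j:ℝ) := by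
    rw [show N - p - j = (N - p) - j from rfl, Nat.cast_sub (by omega)]
  rw [hc1, hc2] at hterm
  linarith


/-- (a) each `φ_a` (for `1 ≤ a ≤ N−p`) belongs to `E_{N,p}`; (b) for
`0 < ε ≤ (p−1)/(N−p+1)` the map `h` takes values in `E_{N,p}`, is injective, and is continuous
for the supremum distance on `E_{N,p}`. -/
theorem statement13 (p N : ℕ) (hp : p.Prime) (hN : p < N) :
    (∀ a : ℕ, 1 ≤ a → a ≤ N - p → ENp p N (phiF p N a)) ∧
    (∀ ε : ℝ, 0 < ε → ε ≤ ((p : ℝ) - 1) / ((N : ℝ) - p + 1) →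
      (∀ t : ℕ → ℝ, SimplexConstraints (N - p) t ε → ENp p N (hMap p N t)) ∧
      (∀ t t' : ℕ → ℝ, SimplexConstraints (N - p) t ε → SimplexConstraints (N - p) t' ε →
        (∀ x ∈ Set.Icc (1 : ℝ) p, hMap p N t x = hMap p N t' x) →
        ∀ i, i ≤ N - p → t i = t' i) ∧
      (∀ t : ℕ → ℝ, SimplexConstraints (N - p) t ε → ∀ η : ℝ, 0 < η →
        ∃ δ : ℝ, 0 < δ ∧ ∀ t' : ℕ → ℝ, SimplexConstraints (N - p) t' ε →
          (∀ i, i ≤ N - p → |t i - t' i| < δ) →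
          ∀ x ∈ Set.Icc (1 : ℝ) p, |hMap p N t x - hMap p N t' x| < η)) := by
  have hp2 : 2 ≤ p := hp.two_le
  have hpr : (2:ℝ) ≤ p := by exact_mod_cast hp2
  have hnpr : (1:ℝ) ≤ ((N - p : ℕ) : ℝ) := by exact_mod_cast (by omega : 1 ≤ N - p)
  have hcast : ((N:ℝ) - (p:ℝ) + 1) = ((N - p : ℕ) : ℝ) + 1 := by
    push_cast [Nat.cast_sub (le_of_lt hN)]
    ring
  constructor
  · exact fun a ha1 ha2 => phi_mem hp2 hN ha1 ha2
  · intro ε hε0 hεle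
    have hε : ε ≤ ((p:ℝ) - 1) / (((N - p : ℕ) : ℝ) + 1) := by rw [← hcast]; exact hεle
    refine ⟨fun t hT => hMap_mem hp2 hN hT hε0, ?_, ?_⟩
    · -- injectivity
      intro t t' hT hT' hfun i
      induction i using Nat.strong_induction_on with
      | _ i IH =>
        intro hi
        cases i with
        | zero =>
            have h1 := (hMap_one hp2 hN (ε := ε) hT).1
            have h1' := (hMap_one hp2 hN (ε := ε) hT').1
            have heq := hfun 1 ⟨le_refl _, by linarith⟩
            rw [h1, h1'] at heq
            linarith
        | succ j =>
            by_contra hne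
            rcases lt_trichotomy (t (j+1)) (t' (j+1)) with h | h | h
            · exact inj_aux hp2 hN hT hT' hε hfun j hi
                (fun k hk => IH k (by omega) (by omega)) h
            · exact hne h
            · exact inj_aux hp2 hN hT' hT hε (fun x hx => (hfun x hx).symm) j hi
                (fun k hk => (IH k (by omega) (by omega)).symm) h
    · -- continuity
      intro t hT η hη
      set δ := η / (((N - p : ℕ):ℝ) + 1) with hδdef
      have hδpos : 0 < δ := div_pos hη (by linarith)
      refine ⟨δ, hδpos, ?_⟩
      intro t' hT' hδ x hx
      have hS : ∀ j, j ≤ N - p → |(∑ i ∈ Finset.range (j+1), t i)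
          - (∑ i ∈ Finset.range (j+1), t' i)| < η := by
        intro j hj
        have h0 : (∑ i ∈ Finset.range (j+1), t i) - (∑ i ∈ Finset.range (j+1), t' i)
            = ∑ i ∈ Finset.range (j+1), (t i - t' i) := by
          rw [Finset.sum_sub_distrib]
        rw [h0]
        calc |∑ i ∈ Finset.range (j+1), (t i - t' i)|
            ≤ ∑ i ∈ Finset.range (j+1), |t i - t' i| := Finset.abs_sum_le_sum_abs _ _
          _ < ∑ _i ∈ Finset.range (j+1), δ := by
              apply Finset.sum_lt_sum_of_nonempty (by simp)
              intro i hi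
              simp only [Finset.mem_range] at hi
              exact hδ i (by omega)
          _ = ((j+1 : ℕ) : ℝ) * δ := by rw [Finset.sum_const, Finset.card_range, nsmul_eq_mul]
          _ ≤ ((((N - p : ℕ) : ℝ)) + 1) * δ := by
              apply mul_le_mul_of_nonneg_right _ (le_of_lt hδpos)
              push_cast
              have : (j:ℝ) ≤ ((N - p : ℕ) : ℝ) := by exact_mod_cast hj
              linarith
          _ = η := by
              rw [hδdef]
              field_simp
      rw [abs_sub_lt_iff]
      constructor
      · rw [show hMap p N t x - hMap p N t' x < η ↔ hMap p N t x < η + hMap p N t' x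
          from by constructor <;> intro <;> linarith]
        unfold hMap
        rw [Finset.sup'_lt_iff]
        intro j hj
        simp only [Finset.mem_range] at hj
        have hle := Finset.le_sup'
          (f := fun j => phiF p N (N - p - j) x - ∑ i ∈ Finset.range (j + 1), t' i)
          (Finset.mem_range.mpr hj)
        have habs := hS j (by omega)
        rw [abs_lt] at habs
        have : phiF p N (N - p - j) x - ∑ i ∈ Finset.range (j+1), t' i ≤ hMap p N t x
            → True := fun _ => trivial
        unfold hMap at hle
        linarith [hle, habs.1, habs.2]
      · rw [show hMap p N t' x - hMap p N t x < η ↔ hMap p N t' x < η + hMap p N t x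
          from by constructor <;> intro <;> linarith]
        unfold hMap
        rw [Finset.sup'_lt_iff]
        intro j hj
        simp only [Finset.mem_range] at hj
        have hle := Finset.le_sup'
          (f := fun j => phiF p N (N - p - j) x - ∑ i ∈ Finset.range (j + 1), t i)
          (Finset.mem_range.mpr hj)
        have habs := hS j (by omega)
        rw [abs_lt] at habs
        unfold hMap at hle
        linarith [hle, habs.1, habs.2]
end
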